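/- arXiv:1807.00070 — 5 statements merged into one kernel-verified Lean document; each statement's English description precedes it below -/
import Mathlib

section
/- One complete iteration of multiple-proposal MCMC with Barker weights preserves the target distribution: assume in addition that κ is exchangeable in its N proposed points, i.e. κ(x, z∘σ) = κ(x, z) for every x ∈ ℝ^D, every z ∈ (ℝ^D)^N and every permutation σ of {1,…,N}. Then for every measurable f : ℝ^D → ℝ with ∫_{ℝ^D} |f(x)| π(x) dx < ∞ one has ∫_{ℝ^D} ∫_{(ℝ^D)^N} π(x) κ(x, z) ( ∑_{j=1}^{N+1} w_j(y) f(y_j) ) dz dx = ∫_{ℝ^D} f(x) π(x) dx, where y = (x, z_1, …, z_N) ∈ (ℝ^D)^{N+1} is the tuple obtained by placing the current state x in front of the N proposals z. In other words, if the current sample is distributed according to π, then a sample drawn from the N+1 points y with the Barker probabilities w_j(y) is again distributed according to π. -/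
open MeasureTheory

namespace MPKH

variable {D N : ℕ}

/-- The unnormalized Barker weight of the `j`-th coordinate. -/
noncomputable def gw (π : (Fin D → ℝ) → ℝ) (κ : (Fin D → ℝ) → (Fin N → Fin D → ℝ) → ℝ)
    (j : Fin (N + 1)) (y : Fin (N + 1) → Fin D → ℝ) : ℝ :=
  π (y j) * κ (y j) fun l => y (j.succAbove l)

/-- The normalizing constant. -/
noncomputable def Sf (π : (Fin D → ℝ) → ℝ) (κ : (Fin D → ℝ) → (Fin N → Fin D → ℝ) → ℝ)
    (y : Fin (N + 1) → Fin D → ℝ) : ℝ :=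
  ∑ k : Fin (N + 1), gw π κ k y

lemma measurable_gw {π : (Fin D → ℝ) → ℝ} {κ : (Fin D → ℝ) → (Fin N → Fin D → ℝ) → ℝ}
    (hπm : Measurable π) (hκm : Measurable (Function.uncurry κ)) (j : Fin (N + 1)) :
    Measurable (gw π κ j) := by
  have h : Measurable fun y : Fin (N + 1) → Fin D → ℝ =>
      (y j, fun l => y (j.succAbove l)) :=
    (measurable_pi_apply j).prodMk (measurable_pi_lambda _ fun l => measurable_pi_apply _)
  have h2 : Measurable fun y : Fin (N + 1) → Fin D → ℝ =>
      Function.uncurry κ (y j, fun l => y (j.succAbove l)) := hκm.comp h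
  exact (hπm.comp (measurable_pi_apply j)).mul h2

lemma measurable_Sf {π : (Fin D → ℝ) → ℝ} {κ : (Fin D → ℝ) → (Fin N → Fin D → ℝ) → ℝ}
    (hπm : Measurable π) (hκm : Measurable (Function.uncurry κ)) :
    Measurable (Sf π κ) :=
  Finset.measurable_sum _ fun k _ => measurable_gw hπm hκm k

lemma gw_nonneg {π : (Fin D → ℝ) → ℝ} {κ : (Fin D → ℝ) → (Fin N → Fin D → ℝ) → ℝ}
    (hπ0 : ∀ x, 0 ≤ π x) (hκ0 : ∀ x z, 0 ≤ κ x z) (j : Fin (N + 1))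
    (y : Fin (N + 1) → Fin D → ℝ) : 0 ≤ gw π κ j y :=
  mul_nonneg (hπ0 _) (hκ0 _ _)

lemma Sf_nonneg {π : (Fin D → ℝ) → ℝ} {κ : (Fin D → ℝ) → (Fin N → Fin D → ℝ) → ℝ}
    (hπ0 : ∀ x, 0 ≤ π x) (hκ0 : ∀ x z, 0 ≤ κ x z) (y : Fin (N + 1) → Fin D → ℝ) :
    0 ≤ Sf π κ y :=
  Finset.sum_nonneg fun k _ => gw_nonneg hπ0 hκ0 k y

lemma gw_le_Sf {π : (Fin D → ℝ) → ℝ} {κ : (Fin D → ℝ) → (Fin N → Fin D → ℝ) → ℝ}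
    (hπ0 : ∀ x, 0 ≤ π x) (hκ0 : ∀ x z, 0 ≤ κ x z) (j : Fin (N + 1))
    (y : Fin (N + 1) → Fin D → ℝ) : gw π κ j y ≤ Sf π κ y :=
  Finset.single_le_sum (fun k _ => gw_nonneg hπ0 hκ0 k y) (Finset.mem_univ j)

lemma succAbove_perm (σ : Equiv.Perm (Fin (N + 1))) (j : Fin (N + 1)) :
    ∃ τ : Equiv.Perm (Fin N), ∀ l, (σ j).succAbove (τ l) = σ (j.succAbove l) := by
  have hpq : ∀ a : Fin (N + 1), a ≠ j ↔ σ a ≠ σ (j) := by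
    intro a; simp [EmbeddingLike.apply_eq_iff_eq]
  refine ⟨(finSuccAboveEquiv j).trans ((σ.subtypeEquiv hpq).trans
      (finSuccAboveEquiv (σ j)).symm), fun l => ?_⟩
  have h2 := Equiv.apply_symm_apply (finSuccAboveEquiv (σ j))
      (σ.subtypeEquiv hpq ⟨j.succAbove l, j.succAbove_ne l⟩)
  have h3 := congrArg Subtype.val h2
  simp only [finSuccAboveEquiv_apply, Equiv.subtypeEquiv_apply] at h3
  simp only [Equiv.trans_apply, finSuccAboveEquiv_apply, Equiv.subtypeEquiv_apply]
  exact h3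

lemma gw_comp_perm {π : (Fin D → ℝ) → ℝ} {κ : (Fin D → ℝ) → (Fin N → Fin D → ℝ) → ℝ}
    (hκexch : ∀ (x : Fin D → ℝ) (z : Fin N → Fin D → ℝ) (σ : Equiv.Perm (Fin N)),
      κ x (z ∘ σ) = κ x z)
    (σ : Equiv.Perm (Fin (N + 1))) (j : Fin (N + 1)) (y : Fin (N + 1) → Fin D → ℝ) :
    gw π κ j (y ∘ σ) = gw π κ (σ j) y := by
  obtain ⟨τ, hτ⟩ := succAbove_perm σ j
  unfold gw
  simp only [Function.comp_apply]
  congr 1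
  have h : (fun l => y (σ (j.succAbove l))) = (fun l => y ((σ j).succAbove l)) ∘ τ := by
    funext l; simp [Function.comp, hτ l]
  rw [h, hκexch]

lemma Sf_comp_perm {π : (Fin D → ℝ) → ℝ} {κ : (Fin D → ℝ) → (Fin N → Fin D → ℝ) → ℝ}
    (hκexch : ∀ (x : Fin D → ℝ) (z : Fin N → Fin D → ℝ) (σ : Equiv.Perm (Fin N)),
      κ x (z ∘ σ) = κ x z)
    (σ : Equiv.Perm (Fin (N + 1))) (y : Fin (N + 1) → Fin D → ℝ) :
    Sf π κ (y ∘ σ) = Sf π κ y := by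
  unfold Sf
  simp_rw [gw_comp_perm hκexch σ]
  exact Equiv.sum_comp σ fun k => gw π κ k y

lemma integral_comp_perm (σ : Equiv.Perm (Fin (N + 1)))
    (H : (Fin (N + 1) → Fin D → ℝ) → ℝ) :
    ∫ y : Fin (N + 1) → Fin D → ℝ, H (y ∘ σ) = ∫ y : Fin (N + 1) → Fin D → ℝ, H y := by
  have h := volume_measurePreserving_piCongrLeft (fun _ : Fin (N + 1) => Fin D → ℝ) σ.symm
  have he : ⇑(MeasurableEquiv.piCongrLeft (fun _ : Fin (N + 1) => Fin D → ℝ) σ.symm)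
      = fun y : Fin (N + 1) → Fin D → ℝ => y ∘ σ := by
    funext y; funext j
    have := Equiv.piCongrLeft_apply_apply (fun _ : Fin (N + 1) => Fin D → ℝ) σ.symm y (σ j)
    simpa [MeasurableEquiv.coe_piCongrLeft] using this
  have := h.integral_comp
    (MeasurableEquiv.piCongrLeft (fun _ : Fin (N + 1) => Fin D → ℝ) σ.symm).measurableEmbedding H
  rwa [he] at this

lemma integrable_comp_perm (σ : Equiv.Perm (Fin (N + 1)))
    {H : (Fin (N + 1) → Fin D → ℝ) → ℝ} (hH : AEStronglyMeasurable H volume) :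
    Integrable (fun y : Fin (N + 1) → Fin D → ℝ => H (y ∘ σ)) volume ↔ Integrable H volume := by
  have h := volume_measurePreserving_piCongrLeft (fun _ : Fin (N + 1) => Fin D → ℝ) σ.symm
  have he : ⇑(MeasurableEquiv.piCongrLeft (fun _ : Fin (N + 1) => Fin D → ℝ) σ.symm)
      = fun y : Fin (N + 1) → Fin D → ℝ => y ∘ σ := by
    funext y; funext j
    have := Equiv.piCongrLeft_apply_apply (fun _ : Fin (N + 1) => Fin D → ℝ) σ.symm y (σ j)
    simpa [MeasurableEquiv.coe_piCongrLeft] using this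
  have := h.integrable_comp hH
  rwa [he] at this

lemma esymm_eq (x : Fin D → ℝ) (z : Fin N → Fin D → ℝ) :
    (MeasurableEquiv.piFinSuccAbove (fun _ : Fin (N + 1) => Fin D → ℝ) 0).symm (x, z)
      = Matrix.vecCons x z := by
  funext i
  rw [MeasurableEquiv.piFinSuccAbove_symm_apply]
  induction i using Fin.cases with
  | zero => simp [Fin.insertNthEquiv]
  | succ j =>
    simp only [Fin.insertNthEquiv, Equiv.coe_fn_mk, Matrix.cons_val_succ]
    rw [← Fin.zero_succAbove j, Fin.insertNth_apply_succAbove]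

lemma gw_zero_cons (π : (Fin D → ℝ) → ℝ) (κ : (Fin D → ℝ) → (Fin N → Fin D → ℝ) → ℝ)
    (x : Fin D → ℝ) (z : Fin N → Fin D → ℝ) :
    gw π κ 0 (Matrix.vecCons x z) = π x * κ x z := by
  unfold gw
  have h2 : (fun l => Matrix.vecCons x z ((0 : Fin (N + 1)).succAbove l)) = z := by
    funext l; rw [Fin.zero_succAbove]; rfl
  rw [h2]; rfl

section hyps
variable {π : (Fin D → ℝ) → ℝ} {κ : (Fin D → ℝ) → (Fin N → Fin D → ℝ) → ℝ}
  {f : (Fin D → ℝ) → ℝ}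

lemma integrable_kappa (hκ1 : ∀ x : Fin D → ℝ, ∫ z : Fin N → Fin D → ℝ, κ x z = 1)
    (x : Fin D → ℝ) : Integrable (κ x) volume := by
  by_contra h
  have h1 := hκ1 x
  rw [integral_undef h] at h1
  exact zero_ne_one h1

lemma integrable_G0 (hπm : Measurable π) (hπ0 : ∀ x, 0 ≤ π x)
    (hκm : Measurable (Function.uncurry κ)) (hκ0 : ∀ x z, 0 ≤ κ x z)
    (hκ1 : ∀ x : Fin D → ℝ, ∫ z : Fin N → Fin D → ℝ, κ x z = 1)
    (hfm : Measurable f)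
    (hfi : ∫⁻ x : Fin D → ℝ, ENNReal.ofReal (|f x| * π x) < ⊤) :
    Integrable (fun p : (Fin D → ℝ) × (Fin N → Fin D → ℝ) => π p.1 * κ p.1 p.2 * f p.1)
      volume := by
  have hκm' : Measurable fun p : (Fin D → ℝ) × (Fin N → Fin D → ℝ) => κ p.1 p.2 := hκm
  have mG0 : Measurable fun p : (Fin D → ℝ) × (Fin N → Fin D → ℝ) =>
      π p.1 * κ p.1 p.2 * f p.1 :=
    ((hπm.comp measurable_fst).mul hκm').mul (hfm.comp measurable_fst)
  refine ⟨mG0.aestronglyMeasurable, ?_⟩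
  rw [hasFiniteIntegral_iff_norm]
  have key : ∀ p : (Fin D → ℝ) × (Fin N → Fin D → ℝ),
      ENNReal.ofReal ‖π p.1 * κ p.1 p.2 * f p.1‖
        = ENNReal.ofReal (|f p.1| * π p.1) * ENNReal.ofReal (κ p.1 p.2) := by
    intro p
    rw [← ENNReal.ofReal_mul (mul_nonneg (abs_nonneg _) (hπ0 _))]
    congr 1
    rw [Real.norm_eq_abs, abs_mul, abs_mul, abs_of_nonneg (hπ0 _), abs_of_nonneg (hκ0 _ _)]
    ring
  simp_rw [key]
  have mInt : Measurable fun p : (Fin D → ℝ) × (Fin N → Fin D → ℝ) =>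
      ENNReal.ofReal (|f p.1| * π p.1) * ENNReal.ofReal (κ p.1 p.2) :=
    (((hfm.comp measurable_fst).abs.mul (hπm.comp measurable_fst)).ennreal_ofReal).mul
      hκm'.ennreal_ofReal
  rw [Measure.volume_eq_prod, lintegral_prod _ mInt.aemeasurable]
  have hκint : ∀ x, (∫⁻ z : Fin N → Fin D → ℝ, ENNReal.ofReal (κ x z)) = 1 := by
    intro x
    rw [← ofReal_integral_eq_lintegral_ofReal (integrable_kappa hκ1 x)
      (Filter.Eventually.of_forall (hκ0 x)), hκ1 x, ENNReal.ofReal_one]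
  calc (∫⁻ x : Fin D → ℝ, ∫⁻ z : Fin N → Fin D → ℝ,
        ENNReal.ofReal (|f x| * π x) * ENNReal.ofReal (κ x z))
      = ∫⁻ x : Fin D → ℝ, ENNReal.ofReal (|f x| * π x) := by
        refine lintegral_congr fun x => ?_
        have mz : Measurable fun z : Fin N → Fin D → ℝ => ENNReal.ofReal (κ x z) :=
          (hκm.comp measurable_prodMk_left).ennreal_ofReal
        rw [lintegral_const_mul _ mz, hκint x, mul_one]
    _ < ⊤ := hfi

lemma integrable_Phi0 (hπm : Measurable π) (hπ0 : ∀ x, 0 ≤ π x)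
    (hκm : Measurable (Function.uncurry κ)) (hκ0 : ∀ x z, 0 ≤ κ x z)
    (hκ1 : ∀ x : Fin D → ℝ, ∫ z : Fin N → Fin D → ℝ, κ x z = 1)
    (hfm : Measurable f)
    (hfi : ∫⁻ x : Fin D → ℝ, ENNReal.ofReal (|f x| * π x) < ⊤) :
    Integrable (fun y : Fin (N + 1) → Fin D → ℝ => gw π κ 0 y * f (y 0)) volume := by
  have hmp := (volume_preserving_piFinSuccAbove (fun _ : Fin (N + 1) => Fin D → ℝ) 0).symm
  have hGfun : (fun y : Fin (N + 1) → Fin D → ℝ => gw π κ 0 y * f (y 0)) ∘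
      ⇑(MeasurableEquiv.piFinSuccAbove (fun _ : Fin (N + 1) => Fin D → ℝ) 0).symm
      = fun p : (Fin D → ℝ) × (Fin N → Fin D → ℝ) => π p.1 * κ p.1 p.2 * f p.1 := by
    funext p
    obtain ⟨x, z⟩ := p
    simp only [Function.comp_apply, esymm_eq, gw_zero_cons]
    rfl
  have asm : AEStronglyMeasurable
      (fun y : Fin (N + 1) → Fin D → ℝ => gw π κ 0 y * f (y 0)) volume :=
    ((measurable_gw hπm hκm 0).mul (hfm.comp (measurable_pi_apply 0))).aestronglyMeasurable
  refine (hmp.integrable_comp asm).mp ?_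
  rw [hGfun]
  exact integrable_G0 hπm hπ0 hκm hκ0 hκ1 hfm hfi

lemma integral_Phi0 (hπm : Measurable π) (hπ0 : ∀ x, 0 ≤ π x)
    (hκm : Measurable (Function.uncurry κ)) (hκ0 : ∀ x z, 0 ≤ κ x z)
    (hκ1 : ∀ x : Fin D → ℝ, ∫ z : Fin N → Fin D → ℝ, κ x z = 1)
    (hfm : Measurable f)
    (hfi : ∫⁻ x : Fin D → ℝ, ENNReal.ofReal (|f x| * π x) < ⊤) :
    ∫ y : Fin (N + 1) → Fin D → ℝ, gw π κ 0 y * f (y 0) = ∫ x : Fin D → ℝ, f x * π x := by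
  have hmp := (volume_preserving_piFinSuccAbove (fun _ : Fin (N + 1) => Fin D → ℝ) 0).symm
  have h := hmp.integral_comp
    (MeasurableEquiv.piFinSuccAbove (fun _ : Fin (N + 1) => Fin D → ℝ) 0).symm.measurableEmbedding
    (fun y : Fin (N + 1) → Fin D → ℝ => gw π κ 0 y * f (y 0))
  rw [← h]
  have hGfun : (fun p : (Fin D → ℝ) × (Fin N → Fin D → ℝ) =>
      gw π κ 0 ((MeasurableEquiv.piFinSuccAbove (fun _ : Fin (N + 1) => Fin D → ℝ) 0).symm p)
        * f (((MeasurableEquiv.piFinSuccAbove (fun _ : Fin (N + 1) => Fin D → ℝ) 0).symm p) 0))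
      = fun p : (Fin D → ℝ) × (Fin N → Fin D → ℝ) => π p.1 * κ p.1 p.2 * f p.1 := by
    funext p
    obtain ⟨x, z⟩ := p
    simp only [esymm_eq, gw_zero_cons]
    rfl
  rw [hGfun]
  have intG0 := integrable_G0 hπm hπ0 hκm hκ0 hκ1 hfm hfi
  rw [Measure.volume_eq_prod] at intG0 ⊢
  rw [integral_prod _ intG0]
  have : ∀ x : Fin D → ℝ, (∫ z : Fin N → Fin D → ℝ, π x * κ x z * f x)
      = f x * π x := by
    intro x
    have : (fun z : Fin N → Fin D → ℝ => π x * κ x z * f x)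
        = fun z => (f x * π x) * κ x z := by funext z; ring
    rw [this, integral_const_mul, hκ1 x, mul_one]
  simp_rw [this]

end hyps
end MPKH

/-- One complete iteration of multiple-proposal MCMC with Barker weights preserves the
target distribution `π`, assuming the proposal density `κ` is exchangeable in its `N`
proposed points. Here `Matrix.vecCons x z` is the tuple `y = (x, z₁, …, z_N)` and the Barker
weight of `y_j` is `π(y_j) κ(y_j, y_{∖j}) / ∑ₖ π(y_k) κ(y_k, y_{∖k})` (interpreted as `0`
when the denominator vanishes, which is the convention of real division in Lean). -/
theorem mpmcmc_barker_preserves_target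
    (D N : ℕ) (hD : 1 ≤ D) (hN : 1 ≤ N)
    (π : (Fin D → ℝ) → ℝ)
    (hπm : Measurable π) (hπ0 : ∀ x, 0 ≤ π x)
    (hπ1 : ∫ x : Fin D → ℝ, π x = 1)
    (κ : (Fin D → ℝ) → (Fin N → Fin D → ℝ) → ℝ)
    (hκm : Measurable (Function.uncurry κ))
    (hκ0 : ∀ x z, 0 ≤ κ x z)
    (hκ1 : ∀ x : Fin D → ℝ, ∫ z : Fin N → Fin D → ℝ, κ x z = 1)
    (hκexch : ∀ (x : Fin D → ℝ) (z : Fin N → Fin D → ℝ) (σ : Equiv.Perm (Fin N)),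
      κ x (z ∘ σ) = κ x z)
    (f : (Fin D → ℝ) → ℝ) (hfm : Measurable f)
    (hfi : ∫⁻ x : Fin D → ℝ, ENNReal.ofReal (|f x| * π x) < ⊤) :
    (∫ x : Fin D → ℝ, ∫ z : Fin N → Fin D → ℝ,
        π x * κ x z *
          ∑ j : Fin (N + 1),
            (π (Matrix.vecCons x z j) *
                κ (Matrix.vecCons x z j) (fun l => Matrix.vecCons x z (j.succAbove l)) /
              ∑ k : Fin (N + 1),
                π (Matrix.vecCons x z k) *
                  κ (Matrix.vecCons x z k) (fun l => Matrix.vecCons x z (k.succAbove l))) *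
            f (Matrix.vecCons x z j))
      = ∫ x : Fin D → ℝ, f x * π x := by
  classical
  open MPKH in
  -- the per-proposal integrand on the big space
  set h : Fin (N + 1) → (Fin (N + 1) → Fin D → ℝ) → ℝ :=
    fun j y => gw π κ 0 y * (gw π κ j y / Sf π κ y * f (y j)) with hh
  set h' : Fin (N + 1) → (Fin (N + 1) → Fin D → ℝ) → ℝ :=
    fun j y => gw π κ j y * (gw π κ 0 y / Sf π κ y * f (y 0)) with hh'
  have hmeas : ∀ j, Measurable (h j) := by
    intro j
    exact (measurable_gw hπm hκm 0).mul
      (((measurable_gw hπm hκm j).div (measurable_Sf hπm hκm)).mul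
        (hfm.comp (measurable_pi_apply j)))
  have hmeas' : ∀ j, Measurable (h' j) := by
    intro j
    exact (measurable_gw hπm hκm j).mul
      (((measurable_gw hπm hκm 0).div (measurable_Sf hπm hκm)).mul
        (hfm.comp (measurable_pi_apply 0)))
  have Φmeas : ∀ j : Fin (N + 1),
      Measurable (fun y : Fin (N + 1) → Fin D → ℝ => gw π κ j y * f (y j)) := fun j =>
    (measurable_gw hπm hκm j).mul (hfm.comp (measurable_pi_apply j))
  have intΦ0 := integrable_Phi0 hπm hπ0 hκm hκ0 hκ1 hfm hfi
  -- `Φ j` is integrable by a coordinate swap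
  have intΦ : ∀ j : Fin (N + 1),
      Integrable (fun y : Fin (N + 1) → Fin D → ℝ => gw π κ j y * f (y j)) volume := by
    intro j
    set σ := Equiv.swap (0 : Fin (N + 1)) j with hσ
    have heq : (fun y : Fin (N + 1) → Fin D → ℝ => gw π κ j (y ∘ σ) * f ((y ∘ σ) j))
        = fun y => gw π κ 0 y * f (y 0) := by
      funext y
      rw [gw_comp_perm hκexch]
      have hj : σ j = 0 := Equiv.swap_apply_right 0 j
      simp [hj]
    refine (integrable_comp_perm σ (Φmeas j).aestronglyMeasurable).mp ?_
    rw [heq]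
    exact intΦ0
  -- `|f|`-version is integrable too
  have intΦa : ∀ j : Fin (N + 1),
      Integrable (fun y : Fin (N + 1) → Fin D → ℝ => gw π κ j y * |f (y j)|) volume := by
    intro j
    have := (intΦ j).abs
    have heq : (fun y : Fin (N + 1) → Fin D → ℝ => |gw π κ j y * f (y j)|)
        = fun y => gw π κ j y * |f (y j)| := by
      funext y
      rw [abs_mul, abs_of_nonneg (gw_nonneg hπ0 hκ0 j y)]
    rwa [heq] at this
  -- the key domination bound
  have key : ∀ (j : Fin (N + 1)) (y : Fin (N + 1) → Fin D → ℝ),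
      gw π κ 0 y * (gw π κ j y / Sf π κ y) ≤ gw π κ j y := by
    intro j y
    rcases eq_or_ne (Sf π κ y) 0 with hS | hS
    · rw [hS, div_zero, mul_zero]
      exact gw_nonneg hπ0 hκ0 j y
    · have hSpos : 0 < Sf π κ y := lt_of_le_of_ne (Sf_nonneg hπ0 hκ0 y) (Ne.symm hS)
      calc gw π κ 0 y * (gw π κ j y / Sf π κ y)
          = gw π κ j y * (gw π κ 0 y / Sf π κ y) := by ring
        _ ≤ gw π κ j y * 1 := by
            refine mul_le_mul_of_nonneg_left ?_ (gw_nonneg hπ0 hκ0 j y)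
            exact (div_le_one hSpos).2 (gw_le_Sf hπ0 hκ0 0 y)
        _ = gw π κ j y := mul_one _
  have hbound : ∀ (j : Fin (N + 1)) (y : Fin (N + 1) → Fin D → ℝ),
      ‖h j y‖ ≤ gw π κ j y * |f (y j)| := by
    intro j y
    have h0 : 0 ≤ gw π κ 0 y := gw_nonneg hπ0 hκ0 0 y
    have hd : 0 ≤ gw π κ j y / Sf π κ y :=
      div_nonneg (gw_nonneg hπ0 hκ0 j y) (Sf_nonneg hπ0 hκ0 y)
    rw [hh]
    simp only []
    rw [Real.norm_eq_abs, abs_mul, abs_mul, abs_of_nonneg h0, abs_of_nonneg hd, ← mul_assoc]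
    exact mul_le_mul_of_nonneg_right (key j y) (abs_nonneg _)
  have inth : ∀ j, Integrable (h j) volume := by
    intro j
    exact Integrable.mono' (intΦa j) (hmeas j).aestronglyMeasurable
      (Filter.Eventually.of_forall (hbound j))
  have inth' : ∀ j, Integrable (h' j) volume := by
    intro j
    set σ := Equiv.swap (0 : Fin (N + 1)) j with hσ
    have heq : (fun y : Fin (N + 1) → Fin D → ℝ => h j (y ∘ σ)) = h' j := by
      funext y
      rw [hh, hh']
      simp only []
      rw [gw_comp_perm hκexch, gw_comp_perm hκexch, Sf_comp_perm hκexch]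
      have hj : σ j = 0 := Equiv.swap_apply_right 0 j
      have h0 : σ 0 = j := Equiv.swap_apply_left 0 j
      simp [hj, h0]
    rw [← heq]
    exact (integrable_comp_perm σ (hmeas j).aestronglyMeasurable).mpr (inth j)
  -- Step 1: rewrite the LHS as an integral over the big product space
  have e0 : (∫ x : Fin D → ℝ, ∫ z : Fin N → Fin D → ℝ,
        π x * κ x z *
          ∑ j : Fin (N + 1),
            (π (Matrix.vecCons x z j) *
                κ (Matrix.vecCons x z j) (fun l => Matrix.vecCons x z (j.succAbove l)) /
              ∑ k : Fin (N + 1),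
                π (Matrix.vecCons x z k) *
                  κ (Matrix.vecCons x z k) (fun l => Matrix.vecCons x z (k.succAbove l))) *
            f (Matrix.vecCons x z j))
      = ∫ x : Fin D → ℝ, ∫ z : Fin N → Fin D → ℝ,
          ∑ j : Fin (N + 1), h j (Matrix.vecCons x z) := by
    congr 1
    funext x
    congr 1
    funext z
    have h1 : π x * κ x z = gw π κ 0 (Matrix.vecCons x z) := (gw_zero_cons π κ x z).symm
    rw [h1, Finset.mul_sum]
    refine Finset.sum_congr rfl fun j _ => ?_
    rw [hh]
    show gw π κ 0 (Matrix.vecCons x z) *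
        ((gw π κ j (Matrix.vecCons x z) / Sf π κ (Matrix.vecCons x z)) *
          f (Matrix.vecCons x z j)) = _
    rfl
  rw [e0]
  -- Step 2: identify the iterated integral with an integral over `Fin (N+1) → Fin D → ℝ`
  have intH : Integrable (fun y : Fin (N + 1) → Fin D → ℝ => ∑ j : Fin (N + 1), h j y)
      volume := integrable_finset_sum _ fun j _ => inth j
  have hmp := (volume_preserving_piFinSuccAbove (fun _ : Fin (N + 1) => Fin D → ℝ) 0).symm
  have e1 : (∫ x : Fin D → ℝ, ∫ z : Fin N → Fin D → ℝ,
        ∑ j : Fin (N + 1), h j (Matrix.vecCons x z))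
      = ∫ y : Fin (N + 1) → Fin D → ℝ, ∑ j : Fin (N + 1), h j y := by
    have hcomp : ((fun y : Fin (N + 1) → Fin D → ℝ => ∑ j : Fin (N + 1), h j y) ∘
        ⇑(MeasurableEquiv.piFinSuccAbove (fun _ : Fin (N + 1) => Fin D → ℝ) 0).symm)
        = Function.uncurry (fun (x : Fin D → ℝ) (z : Fin N → Fin D → ℝ) =>
            ∑ j : Fin (N + 1), h j (Matrix.vecCons x z)) := by
      funext p
      obtain ⟨x, z⟩ := p
      simp only [Function.comp_apply, Function.uncurry_apply_pair, esymm_eq]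
    have hint2 : Integrable (Function.uncurry (fun (x : Fin D → ℝ) (z : Fin N → Fin D → ℝ) =>
        ∑ j : Fin (N + 1), h j (Matrix.vecCons x z))) (volume.prod volume) := by
      rw [← hcomp, ← Measure.volume_eq_prod]
      exact (hmp.integrable_comp intH.aestronglyMeasurable).mpr intH
    rw [integral_integral hint2]
    have h3 := hmp.integral_comp
      (MeasurableEquiv.piFinSuccAbove (fun _ : Fin (N + 1) => Fin D → ℝ) 0).symm.measurableEmbedding
      (fun y : Fin (N + 1) → Fin D → ℝ => ∑ j : Fin (N + 1), h j y)
    rw [← Measure.volume_eq_prod]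
    rw [← h3]
    congr 1
    funext p
    obtain ⟨x, z⟩ := p
    simp only [esymm_eq]
  rw [e1]
  -- Step 3: split into per-proposal pieces, swap coordinates in each
  rw [integral_finset_sum _ fun j _ => inth j]
  have e2 : ∀ j : Fin (N + 1), (∫ y : Fin (N + 1) → Fin D → ℝ, h j y)
      = ∫ y : Fin (N + 1) → Fin D → ℝ, h' j y := by
    intro j
    set σ := Equiv.swap (0 : Fin (N + 1)) j with hσ
    have heq : (fun y : Fin (N + 1) → Fin D → ℝ => h j (y ∘ σ)) = h' j := by
      funext y
      rw [hh, hh']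
      simp only []
      rw [gw_comp_perm hκexch, gw_comp_perm hκexch, Sf_comp_perm hκexch]
      have hj : σ j = 0 := Equiv.swap_apply_right 0 j
      have h0 : σ 0 = j := Equiv.swap_apply_left 0 j
      simp [hj, h0]
    rw [← integral_comp_perm σ (h j)]
    rw [heq]
  simp_rw [e2]
  rw [← integral_finset_sum _ fun j _ => inth' j]
  -- Step 4: sum the weights to 1 and conclude
  have e3 : ∀ y : Fin (N + 1) → Fin D → ℝ,
      (∑ j : Fin (N + 1), h' j y) = gw π κ 0 y * f (y 0) := by
    intro y
    rw [hh']
    simp only []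
    rw [← Finset.sum_mul]
    show Sf π κ y * (gw π κ 0 y / Sf π κ y * f (y 0)) = _
    rcases eq_or_ne (Sf π κ y) 0 with hS | hS
    · have hg0 : gw π κ 0 y = 0 :=
        le_antisymm (hS ▸ gw_le_Sf hπ0 hκ0 0 y) (gw_nonneg hπ0 hκ0 0 y)
      rw [hS, hg0]
      ring
    · rw [← mul_assoc, mul_comm (Sf π κ y), div_mul_cancel₀ _ hS]
  simp_rw [e3]
  exact integral_Phi0 hπm hπ0 hκm hκ0 hκ1 hfm hfi
end

section
/- Unbiasedness of the importance-sampling multiple-proposal estimator under the stationary joint distribution: for every measurable f : ℝ^D → ℝ with ∫_{ℝ^D} |f(x)| π(x) dx < ∞, the expectation of the importance-sampling estimate ∑_{i=1}^{N+1} w_i(y) f(y_i) under the joint stationary density p(y) = (1/(N+1)) S(y) on (ℝ^D)^{N+1} equals the target integral, i.e. ∫_{(ℝ^D)^{N+1}} ( ∑_{i=1}^{N+1} w_i(y) f(y_i) ) · (1/(N+1)) S(y) dy = ∫_{ℝ^D} f(x) π(x) dx. -/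
open MeasureTheory

section Aux

variable {D N : ℕ}
  (π : (Fin D → ℝ) → ℝ) (κ : (Fin D → ℝ) → (Fin N → Fin D → ℝ) → ℝ)
  (f : (Fin D → ℝ) → ℝ)

/-- The product-space integrand. -/
noncomputable def mpAuxG : (Fin D → ℝ) × (Fin N → Fin D → ℝ) → ℝ :=
  fun p => f p.1 * (π p.1 * κ p.1 p.2)

lemma mpAuxG_measurable (hπm : Measurable π) (hκm : Measurable (Function.uncurry κ))
    (hfm : Measurable f) : Measurable (mpAuxG π κ f) :=
  (hfm.comp measurable_fst).mul ((hπm.comp measurable_fst).mul hκm)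

lemma mpAuxG_integrable (hπm : Measurable π) (hπ0 : ∀ x, 0 ≤ π x)
    (hκm : Measurable (Function.uncurry κ)) (hκ0 : ∀ x z, 0 ≤ κ x z)
    (hκ1 : ∀ x : Fin D → ℝ, ∫ z : Fin N → Fin D → ℝ, κ x z = 1)
    (hfm : Measurable f)
    (hfi : ∫⁻ x : Fin D → ℝ, ENNReal.ofReal (|f x| * π x) < ⊤) :
    Integrable (mpAuxG π κ f) (volume.prod volume) := by
  have hκint : ∀ x, Integrable (κ x) := by
    intro x
    by_contra h
    have h1 := hκ1 x
    rw [integral_undef h] at h1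
    exact one_ne_zero h1.symm
  have hκxm : ∀ x, Measurable (κ x) := fun x =>
    hκm.comp (measurable_prodMk_left)
  have hκlin : ∀ x, ∫⁻ z, ENNReal.ofReal (κ x z) = 1 := by
    intro x
    rw [← ofReal_integral_eq_lintegral_ofReal (hκint x)
      (Filter.Eventually.of_forall (hκ0 x)), hκ1 x, ENNReal.ofReal_one]
  refine ⟨(mpAuxG_measurable π κ f hπm hκm hfm).aestronglyMeasurable, ?_⟩
  rw [hasFiniteIntegral_def]
  have hnorm : ∀ p : (Fin D → ℝ) × (Fin N → Fin D → ℝ),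
      ‖mpAuxG π κ f p‖ₑ
        = ENNReal.ofReal (|f p.1| * π p.1) * ENNReal.ofReal (κ p.1 p.2) := by
    intro p
    rw [← ENNReal.ofReal_mul (mul_nonneg (abs_nonneg _) (hπ0 _)), ← ofReal_norm]
    congr 1
    simp only [mpAuxG, Real.norm_eq_abs, abs_mul, abs_of_nonneg (hπ0 p.1),
      abs_of_nonneg (hκ0 p.1 p.2), mul_assoc]
  simp_rw [hnorm]
  rw [lintegral_prod]
  · calc ∫⁻ x, ∫⁻ z, ENNReal.ofReal (|f x| * π x) * ENNReal.ofReal (κ x z)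
        = ∫⁻ x, ENNReal.ofReal (|f x| * π x) * ∫⁻ z, ENNReal.ofReal (κ x z) := by
          refine lintegral_congr fun x => ?_
          rw [lintegral_const_mul _ (hκxm x).ennreal_ofReal]
    _ = ∫⁻ x, ENNReal.ofReal (|f x| * π x) := by
          refine lintegral_congr fun x => ?_
          rw [hκlin x, mul_one]
    _ < ⊤ := hfi
  · exact (ENNReal.measurable_ofReal.comp
      ((hfm.comp measurable_fst).abs.mul (hπm.comp measurable_fst))).mul
      (ENNReal.measurable_ofReal.comp hκm) |>.aemeasurable

lemma mpAuxG_integral (hπm : Measurable π) (hπ0 : ∀ x, 0 ≤ π x)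
    (hκm : Measurable (Function.uncurry κ)) (hκ0 : ∀ x z, 0 ≤ κ x z)
    (hκ1 : ∀ x : Fin D → ℝ, ∫ z : Fin N → Fin D → ℝ, κ x z = 1)
    (hfm : Measurable f)
    (hfi : ∫⁻ x : Fin D → ℝ, ENNReal.ofReal (|f x| * π x) < ⊤) :
    ∫ p, mpAuxG π κ f p ∂(volume.prod volume) = ∫ x, f x * π x := by
  rw [integral_prod _ (mpAuxG_integrable π κ f hπm hπ0 hκm hκ0 hκ1 hfm hfi)]
  refine integral_congr_ae (Filter.Eventually.of_forall fun x => ?_)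
  simp only [mpAuxG]
  rw [show (fun z => f x * (π x * κ x z)) = fun z => (f x * π x) * κ x z by
    funext z; ring]
  rw [integral_const_mul, hκ1 x, mul_one]

lemma mp_key_alg (n : ℕ) (a b : Fin n → ℝ) (c : ℝ) (ha : ∀ i, 0 ≤ a i) :
    (∑ i, (a i / ∑ k, a k) * b i) * (c * ∑ k, a k) = c * ∑ i, b i * a i := by
  by_cases hS : (∑ k, a k) = 0
  · have hz : ∀ i ∈ Finset.univ, a i = 0 :=
      (Finset.sum_eq_zero_iff_of_nonneg fun i _ => ha i).1 hS
    rw [hS, mul_zero, mul_zero,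
      Finset.sum_eq_zero (fun i hi => by rw [hz i hi, mul_zero]), mul_zero]
  · calc (∑ i, (a i / ∑ k, a k) * b i) * (c * ∑ k, a k)
        = ∑ i, (a i / ∑ k, a k) * b i * (c * ∑ k, a k) := Finset.sum_mul _ _ _
      _ = ∑ i, c * (b i * a i) := Finset.sum_congr rfl fun i _ => by
          field_simp
      _ = c * ∑ i, b i * a i := (Finset.mul_sum _ _ _).symm

end Aux

/-- Unbiasedness of the importance-sampling multiple-proposal estimator under the
stationary joint density `p(y) = S(y)/(N+1)` on `(ℝ^D)^{N+1}`, where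
`S(y) = ∑ₖ π(y_k) κ(y_k, y_{∖k})` and the Barker weights are
`w_i(y) = π(y_i) κ(y_i, y_{∖i}) / S(y)` (equal to `0` when `S(y) = 0`, by the
convention of real division in Lean). -/
theorem is_mpmcmc_unbiased
    (D N : ℕ) (hD : 1 ≤ D) (hN : 1 ≤ N)
    (π : (Fin D → ℝ) → ℝ)
    (hπm : Measurable π) (hπ0 : ∀ x, 0 ≤ π x)
    (hπ1 : ∫ x : Fin D → ℝ, π x = 1)
    (κ : (Fin D → ℝ) → (Fin N → Fin D → ℝ) → ℝ)
    (hκm : Measurable (Function.uncurry κ))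
    (hκ0 : ∀ x z, 0 ≤ κ x z)
    (hκ1 : ∀ x : Fin D → ℝ, ∫ z : Fin N → Fin D → ℝ, κ x z = 1)
    (f : (Fin D → ℝ) → ℝ) (hfm : Measurable f)
    (hfi : ∫⁻ x : Fin D → ℝ, ENNReal.ofReal (|f x| * π x) < ⊤) :
    (∫ y : Fin (N + 1) → Fin D → ℝ,
        (∑ i : Fin (N + 1),
          (π (y i) * κ (y i) (fun l => y (i.succAbove l)) /
            ∑ k : Fin (N + 1), π (y k) * κ (y k) (fun l => y (k.succAbove l))) *
          f (y i)) *
        ((1 / ((N : ℝ) + 1)) *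
          ∑ k : Fin (N + 1), π (y k) * κ (y k) (fun l => y (k.succAbove l))))
      = ∫ x : Fin D → ℝ, f x * π x := by
  set c : ℝ := 1 / ((N : ℝ) + 1) with hc
  set g := mpAuxG π κ f with hg
  -- the measurable equivalence picking out coordinate i
  set e : Fin (N + 1) → ((Fin (N + 1) → Fin D → ℝ) ≃ᵐ
      ((Fin D → ℝ) × (Fin N → Fin D → ℝ))) :=
    fun i => MeasurableEquiv.piFinSuccAbove (fun _ => Fin D → ℝ) i with he
  have hmp : ∀ i, MeasurePreserving (e i) volume (volume.prod volume) := by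
    intro i
    have := measurePreserving_piFinSuccAbove
      (fun _ : Fin (N + 1) => (volume : Measure (Fin D → ℝ))) i
    simp only [← volume_pi] at this
    exact this
  have hgint := mpAuxG_integrable π κ f hπm hπ0 hκm hκ0 hκ1 hfm hfi
  have hterm_int : ∀ i : Fin (N + 1),
      Integrable (fun y : Fin (N + 1) → Fin D → ℝ => g (e i y)) := by
    intro i
    exact ((hmp i).integrable_comp_emb (e i).measurableEmbedding).2 hgint
  have hterm : ∀ i : Fin (N + 1),
      (∫ y : Fin (N + 1) → Fin D → ℝ, g (e i y)) = ∫ x, f x * π x := by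
    intro i
    rw [(hmp i).integral_comp (e i).measurableEmbedding g]
    exact mpAuxG_integral π κ f hπm hπ0 hκm hκ0 hκ1 hfm hfi
  have key : ∀ y : Fin (N + 1) → Fin D → ℝ,
      (∑ i : Fin (N + 1),
          (π (y i) * κ (y i) (fun l => y (i.succAbove l)) /
            ∑ k : Fin (N + 1), π (y k) * κ (y k) (fun l => y (k.succAbove l))) *
          f (y i)) *
        (c * ∑ k : Fin (N + 1), π (y k) * κ (y k) (fun l => y (k.succAbove l)))
      = c * ∑ i : Fin (N + 1), g (e i y) := by
    intro y
    exact mp_key_alg (N + 1) (fun i => π (y i) * κ (y i) (fun l => y (i.succAbove l)))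
      (fun i => f (y i)) c (fun i => mul_nonneg (hπ0 _) (hκ0 _ _))
  calc (∫ y : Fin (N + 1) → Fin D → ℝ,
        (∑ i : Fin (N + 1),
          (π (y i) * κ (y i) (fun l => y (i.succAbove l)) /
            ∑ k : Fin (N + 1), π (y k) * κ (y k) (fun l => y (k.succAbove l))) *
          f (y i)) *
        (c * ∑ k : Fin (N + 1), π (y k) * κ (y k) (fun l => y (k.succAbove l))))
      = ∫ y : Fin (N + 1) → Fin D → ℝ, c * ∑ i : Fin (N + 1), g (e i y) :=
        integral_congr_ae (Filter.Eventually.of_forall key)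
    _ = c * ∑ i : Fin (N + 1), ∫ y : Fin (N + 1) → Fin D → ℝ, g (e i y) := by
        rw [integral_const_mul, integral_finset_sum _ fun i _ => hterm_int i]
    _ = c * (((N : ℝ) + 1) * ∫ x, f x * π x) := by
        rw [Finset.sum_congr rfl fun i _ => hterm i, Finset.sum_const,
          Finset.card_univ, Fintype.card_fin, nsmul_eq_mul]
        push_cast
        ring
    _ = ∫ x, f x * π x := by
        rw [hc]
        have : ((N : ℝ) + 1) ≠ 0 := by positivity
        field_simp
end

section
/- Uniform distribution of stacked blocks of a CUD sequence (auxiliary technicality): let (v_n)_{n≥0} be a CUD sequence in [0,1], and fix integers d ≥ 1 and k ≥ 1. For i ≥ 0 define the point x_i ∈ [0,1]^{d·k} whose (j,l)-th coordinate (0 ≤ j < k, 0 ≤ l < d) equals v_{(i+j)·d + l}, i.e. x_i stacks k consecutive non-overlapping d-blocks of (v_n) starting at block i. Then the points (x_i) are uniformly distributed on [0,1]^{d·k} in the sense that for every pair a, b ∈ [0,1]^{d·k} with a ≤ b coordinatewise, (1/n) · #{0 ≤ i < n : a_m < (x_i)_m ≤ b_m for every coordinate m} converges to ∏_m (b_m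 − a_m) as n → ∞. -/
open scoped Classical

/-- A sequence `(v_n)` in `[0,1]` is completely uniformly distributed (CUD) if for every
dimension `d ≥ 1` and every `a ∈ [0,1]^d`, the proportion of overlapping `d`-blocks
`(v_i, …, v_{i+d-1})` lying in the box `∏ⱼ (0, aⱼ]` converges to `∏ⱼ aⱼ`. -/
def IsCUD (v : ℕ → ℝ) : Prop :=
  ∀ d : ℕ, 1 ≤ d → ∀ a : Fin d → ℝ, (∀ j, a j ∈ Set.Icc (0 : ℝ) 1) →
    Filter.Tendsto
      (fun n : ℕ => (1 / (n : ℝ)) *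
        ((Finset.range n).filter
          (fun i => ∀ j : Fin d, v (i + (j : ℕ)) ∈ Set.Ioc (0 : ℝ) (a j))).card)
      Filter.atTop (nhds (∏ j, a j))


open Filter Finset


noncomputable def ind (a b x : ℝ) : ℝ := if a < x ∧ x ≤ b then 1 else 0

lemma ind_nonneg (a b x : ℝ) : 0 ≤ ind a b x := by unfold ind; split_ifs <;> norm_num

lemma ind_le_one (a b x : ℝ) : ind a b x ≤ 1 := by unfold ind; split_ifs <;> norm_num

lemma ind_abs_le_one (a b x : ℝ) : |ind a b x| ≤ 1 :=
  abs_le.2 ⟨by linarith [ind_nonneg a b x], ind_le_one a b x⟩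

lemma ind_split (a b x : ℝ) (hx0 : 0 ≤ x) (ha : 0 ≤ a) (hab : a ≤ b) :
    ind a b x = ind 0 b x - ind 0 a x := by
  unfold ind
  rcases eq_or_lt_of_le hx0 with h | h
  · rw [if_neg, if_neg, if_neg] <;> simp [← h] <;> intro h' <;> linarith
  · simp only [h, true_and]
    by_cases hxa : x ≤ a
    · rw [if_neg (by rintro ⟨h1, _⟩; linarith), if_pos hxa, if_pos (le_trans hxa hab)]; norm_num
    · by_cases hxb : x ≤ b
      · rw [if_pos ⟨by linarith, hxb⟩, if_pos hxb, if_neg hxa]; norm_num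
      · rw [if_neg (by rintro ⟨_, h1⟩; linarith), if_neg hxb, if_neg hxa]; norm_num

lemma sum_shift_abs (g : ℕ → ℝ) (C : ℝ) (hC : ∀ j, |g j| ≤ C) (c n : ℕ) :
    |(∑ j ∈ range n, g (j + c)) - ∑ j ∈ range n, g j| ≤ 2 * c * C := by
  have hC0 : 0 ≤ C := le_trans (abs_nonneg _) (hC 0)
  have h1 : ∑ j ∈ range (n + c), g j = (∑ j ∈ range n, g j) + ∑ j ∈ range c, g (n + j) :=
    Finset.sum_range_add g n c
  have h2 : ∑ j ∈ range (c + n), g j = (∑ j ∈ range c, g j) + ∑ j ∈ range n, g (c + j) :=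
    Finset.sum_range_add g c n
  have h3 : ∑ j ∈ range n, g (j + c) = ∑ j ∈ range n, g (c + j) :=
    Finset.sum_congr rfl fun j _ => by rw [Nat.add_comm]
  rw [Nat.add_comm c n, h1] at h2
  have key : (∑ j ∈ range n, g (j + c)) - ∑ j ∈ range n, g j
      = (∑ j ∈ range c, g (n + j)) - ∑ j ∈ range c, g j := by
    rw [h3]; linarith
  rw [key]
  have b1 : |∑ j ∈ range c, g (n + j)| ≤ c * C := by
    calc |∑ j ∈ range c, g (n + j)| ≤ ∑ j ∈ range c, |g (n + j)| := Finset.abs_sum_le_sum_abs _ _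
    _ ≤ ∑ _j ∈ range c, C := Finset.sum_le_sum fun j _ => hC _
    _ = c * C := by rw [Finset.sum_const, card_range, nsmul_eq_mul]
  have b2 : |∑ j ∈ range c, g j| ≤ c * C := by
    calc |∑ j ∈ range c, g j| ≤ ∑ j ∈ range c, |g j| := Finset.abs_sum_le_sum_abs _ _
    _ ≤ ∑ _j ∈ range c, C := Finset.sum_le_sum fun j _ => hC _
    _ = c * C := by rw [Finset.sum_const, card_range, nsmul_eq_mul]
  calc |(∑ j ∈ range c, g (n + j)) - ∑ j ∈ range c, g j|
      ≤ |∑ j ∈ range c, g (n + j)| + |∑ j ∈ range c, g j| := abs_sub _ _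
    _ ≤ 2 * c * C := by linarith

lemma cesaro_shift {g : ℕ → ℝ} {μ : ℝ} (hb : ∀ j, |g j| ≤ 1)
    (hg : Tendsto (fun n : ℕ => (1 / (n : ℝ)) * ∑ j ∈ range n, g j) atTop (nhds μ)) (c : ℕ) :
    Tendsto (fun n : ℕ => (1 / (n : ℝ)) * ∑ j ∈ range n, g (j + c)) atTop (nhds μ) := by
  have hdiff : Tendsto
      (fun n : ℕ => (1 / (n : ℝ)) * ((∑ j ∈ range n, g (j + c)) - ∑ j ∈ range n, g j))
      atTop (nhds 0) := by
    refine squeeze_zero_norm (a := fun n : ℕ => (2 * c) / (n : ℝ)) ?_ ?_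
    · intro n
      rcases Nat.eq_zero_or_pos n with h | h
      · simp [h]
      · have hn : (0:ℝ) < n := by exact_mod_cast h
        rw [Real.norm_eq_abs, abs_mul, abs_of_pos (by positivity : (0:ℝ) < 1 / (n:ℝ))]
        calc (1 / (n:ℝ)) * |(∑ j ∈ range n, g (j + c)) - ∑ j ∈ range n, g j|
            ≤ (1 / (n:ℝ)) * (2 * c * 1) := by
              apply mul_le_mul_of_nonneg_left (sum_shift_abs g 1 hb c n) (by positivity)
          _ = 2 * c / (n:ℝ) := by ring
    · exact tendsto_const_div_atTop_nhds_zero_nat _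
  have := hg.add hdiff
  rw [add_zero] at this
  apply this.congr
  intro n; ring


lemma prod_neg_one_pow (S : Finset ℕ) (h : ℕ → ℝ) :
    ∏ m ∈ S, (-(h m)) = (-1) ^ S.card * ∏ m ∈ S, h m := by
  rw [← Finset.prod_const (-1 : ℝ), ← Finset.prod_mul_distrib]
  exact Finset.prod_congr rfl fun m _ => by ring

/-- The fundamental anchored-count convergence, in `ℕ`-indexed form. -/
lemma anchored (v : ℕ → ℝ) (hcud : IsCUD v) (D : ℕ) (hD : 1 ≤ D) (c : ℕ → ℝ)
    (hc : ∀ m, m < D → c m ∈ Set.Icc (0:ℝ) 1) :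
    Filter.Tendsto
      (fun n : ℕ => (1 / (n : ℝ)) * ∑ j ∈ range n, ∏ m ∈ range D, ind 0 (c m) (v (j + m)))
      atTop (nhds (∏ m ∈ range D, c m)) := by
  have h := hcud D hD (fun m : Fin D => c m) (fun m => hc m m.isLt)
  have hval : (∏ m : Fin D, c m) = ∏ m ∈ range D, c m := Fin.prod_univ_eq_prod_range _ _
  rw [hval] at h
  apply h.congr
  intro n
  congr 1
  have : ∀ j : ℕ, ∏ m ∈ range D, ind 0 (c m) (v (j + m))
      = if (∀ m ∈ range D, 0 < v (j + m) ∧ v (j + m) ≤ c m) then (1:ℝ) else 0 := by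
    intro j
    unfold ind
    exact Finset.prod_boole
  rw [Finset.sum_congr rfl fun j _ => this j]
  rw [Finset.sum_boole]
  congr 1
  apply congrArg
  apply Finset.filter_congr
  intro i _
  simp only [Set.mem_Ioc, mem_range]
  constructor
  · intro hh m hm; exact hh ⟨m, hm⟩
  · intro hh m; exact hh m m.isLt
variable (v : ℕ → ℝ)

lemma ptwise (hv : ∀ n, v n ∈ Set.Icc (0 : ℝ) 1) (D : ℕ) (a b : ℕ → ℝ)
    (hab : ∀ m, m < D → 0 ≤ a m ∧ a m ≤ b m ∧ b m ≤ 1) (j : ℕ) :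
    ∏ m ∈ range D, ind (a m) (b m) (v (j + m))
      = ∑ S ∈ (range D).powerset,
          (-1) ^ S.card * ∏ m ∈ range D, ind 0 (S.piecewise a b m) (v (j + m)) := by
  have step1 : ∏ m ∈ range D, ind (a m) (b m) (v (j + m))
      = ∏ m ∈ range D, ((-(ind 0 (a m) (v (j + m)))) + ind 0 (b m) (v (j + m))) := by
    refine Finset.prod_congr rfl fun m hm => ?_
    obtain ⟨h0, h1, h2⟩ := hab m (mem_range.1 hm)
    rw [ind_split _ _ _ (hv _).1 h0 h1]; ring
  rw [step1, Finset.prod_add]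
  refine Finset.sum_congr rfl fun S hS => ?_
  have hSsub : S ⊆ range D := Finset.mem_powerset.1 hS
  rw [prod_neg_one_pow, mul_assoc]
  congr 1
  have hpiece : ∏ m ∈ range D, (S.piecewise (fun m => ind 0 (a m) (v (j + m)))
      (fun m => ind 0 (b m) (v (j + m)))) m
      = (∏ m ∈ range D ∩ S, ind 0 (a m) (v (j + m))) * ∏ m ∈ range D \ S, ind 0 (b m) (v (j + m)) :=
    Finset.prod_piecewise _ _ _ _
  rw [Finset.inter_comm, Finset.inter_eq_left.2 hSsub] at hpiece
  rw [← hpiece]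
  refine Finset.prod_congr rfl fun m _ => ?_
  by_cases h : m ∈ S <;> simp [Finset.piecewise, h]

lemma value_ie (D : ℕ) (a b : ℕ → ℝ) :
    ∏ m ∈ range D, (b m - a m)
      = ∑ S ∈ (range D).powerset, (-1) ^ S.card * ∏ m ∈ range D, S.piecewise a b m := by
  have step1 : ∏ m ∈ range D, (b m - a m) = ∏ m ∈ range D, ((-(a m)) + b m) := by
    refine Finset.prod_congr rfl fun m _ => by ring
  rw [step1, Finset.prod_add]
  refine Finset.sum_congr rfl fun S hS => ?_
  have hSsub : S ⊆ range D := Finset.mem_powerset.1 hS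
  rw [prod_neg_one_pow, mul_assoc]
  congr 1
  have hpiece := Finset.prod_piecewise (range D) S a b
  rw [Finset.inter_comm, Finset.inter_eq_left.2 hSsub] at hpiece
  rw [← hpiece]

lemma stepA (hv : ∀ n, v n ∈ Set.Icc (0 : ℝ) 1) (hcud : IsCUD v)
    (D : ℕ) (hD : 1 ≤ D) (a b : ℕ → ℝ)
    (hab : ∀ m, m < D → 0 ≤ a m ∧ a m ≤ b m ∧ b m ≤ 1) :
    Filter.Tendsto
      (fun n : ℕ => (1 / (n : ℝ)) * ∑ j ∈ range n, ∏ m ∈ range D, ind (a m) (b m) (v (j + m)))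
      atTop (nhds (∏ m ∈ range D, (b m - a m))) := by
  have key : ∀ S ∈ (range D).powerset,
      Filter.Tendsto
        (fun n : ℕ => (1 / (n : ℝ)) * ∑ j ∈ range n,
          ∏ m ∈ range D, ind 0 (S.piecewise a b m) (v (j + m)))
        atTop (nhds (∏ m ∈ range D, S.piecewise a b m)) := by
    intro S hS
    apply anchored v hcud D hD
    intro m hm
    obtain ⟨h0, h1, h2⟩ := hab m hm
    by_cases h : m ∈ S <;> simp [Finset.piecewise, h] <;> constructor <;> linarith
  have hsum := tendsto_finset_sum ((range D).powerset)
    (fun S _hS => ((key S _hS).const_mul ((-1:ℝ) ^ S.card)))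
  rw [value_ie]
  apply hsum.congr
  intro n
  have e1 : ∀ S : Finset ℕ,
      (-1:ℝ) ^ S.card * ((1 / (n:ℝ)) * ∑ j ∈ range n, ∏ m ∈ range D, ind 0 (S.piecewise a b m) (v (j + m)))
      = (1 / (n:ℝ)) * ∑ j ∈ range n, (-1:ℝ) ^ S.card * ∏ m ∈ range D, ind 0 (S.piecewise a b m) (v (j + m)) := by
    intro S
    rw [Finset.mul_sum, Finset.mul_sum, Finset.mul_sum]
    apply Finset.sum_congr rfl
    intro j _
    ring
  rw [Finset.sum_congr rfl fun S _ => e1 S, ← Finset.mul_sum, Finset.sum_comm]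
  rw [Finset.sum_congr rfl fun j (_ : j ∈ range n) => (ptwise v hv D a b hab j).symm]


lemma one_sub_prod_le (s : Finset ℕ) (e : ℕ → ℝ) (h0 : ∀ i ∈ s, 0 ≤ e i)
    (h1 : ∀ i ∈ s, e i ≤ 1) : 1 - ∏ i ∈ s, e i ≤ ∑ i ∈ s, (1 - e i) := by
  classical
  induction s using Finset.cons_induction with
  | empty => simp
  | cons a s ha ih =>
    rw [Finset.prod_cons, Finset.sum_cons]
    have hmem : ∀ i ∈ s, i ∈ Finset.cons a s ha := fun i hi => Finset.mem_cons_of_mem hi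
    have hp0 : 0 ≤ ∏ i ∈ s, e i := Finset.prod_nonneg fun i hi => h0 i (hmem i hi)
    have hp1 : ∏ i ∈ s, e i ≤ 1 := Finset.prod_le_one (fun i hi => h0 i (hmem i hi))
      (fun i hi => h1 i (hmem i hi))
    have ihs := ih (fun i hi => h0 i (hmem i hi)) (fun i hi => h1 i (hmem i hi))
    have ha0 := h0 a (Finset.mem_cons_self a s)
    have ha1 := h1 a (Finset.mem_cons_self a s)
    nlinarith

lemma zind_add_ind (x : ℝ) (hx : x ∈ Set.Icc (0:ℝ) 1) :
    (if x = 0 then (1:ℝ) else 0) + ind 0 1 x = 1 := by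
  unfold ind
  rcases eq_or_lt_of_le hx.1 with h | h
  · rw [if_pos h.symm, if_neg (by rintro ⟨h1, _⟩; linarith)]; norm_num
  · rw [if_neg (by linarith), if_pos ⟨h, hx.2⟩]; norm_num

lemma zeros (v : ℕ → ℝ) (hv : ∀ n, v n ∈ Set.Icc (0 : ℝ) 1) (hcud : IsCUD v) :
    Filter.Tendsto (fun n : ℕ => (1 / (n : ℝ)) * ∑ j ∈ range n, (if v j = 0 then (1:ℝ) else 0))
      atTop (nhds 0) := by
  have h := stepA v hv hcud 1 le_rfl (fun _ => 0) (fun _ => 1) (fun m _ => by norm_num)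
  simp only [Finset.prod_range_one, sub_zero] at h
  have h2 : Filter.Tendsto (fun n : ℕ => 1 - (1 / (n : ℝ)) * ∑ j ∈ range n, ind 0 1 (v (j + 0)))
      atTop (nhds 0) := by
    have h3 := (tendsto_const_nhds (x := (1:ℝ)) (f := atTop (α := ℕ))).sub h
    simpa using h3
  apply h2.congr'
  filter_upwards [eventually_ge_atTop 1] with n hn
  have hn0 : ((n:ℝ)) ≠ 0 := by
    have : (1:ℝ) ≤ n := by exact_mod_cast hn
    linarith
  have hsum : (∑ j ∈ range n, (if v j = 0 then (1:ℝ) else 0)) + ∑ j ∈ range n, ind 0 1 (v (j + 0))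
      = n := by
    rw [← Finset.sum_add_distrib]
    have : ∀ j ∈ range n, (if v j = 0 then (1:ℝ) else 0) + ind 0 1 (v (j + 0)) = 1 := by
      intro j _
      rw [Nat.add_zero]
      exact zind_add_ind (v j) (hv j)
    rw [Finset.sum_congr rfl this, Finset.sum_const, card_range, nsmul_eq_mul, mul_one]
  have : (∑ j ∈ range n, (if v j = 0 then (1:ℝ) else 0)) = (n:ℝ) - ∑ j ∈ range n, ind 0 1 (v (j + 0)) := by
    linarith
  rw [this]
  field_simp

lemma abs_le_eps_add_sq (x c : ℝ) (hc : 0 < c) : |x| ≤ c + x^2 / c := by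
  have h2 : x ^ 2 = |x| ^ 2 := (sq_abs x).symm
  calc |x| = |x| * c / c := by field_simp
    _ ≤ (c * c + x ^ 2) / c := by
        gcongr
        nlinarith [sq_nonneg (|x| - c)]
    _ = c + x ^ 2 / c := by field_simp

set_option maxHeartbeats 1000000 in
lemma strided (f : ℕ → ℝ) (hf0 : ∀ j, 0 ≤ f j) (hf1 : ∀ j, f j ≤ 1)
    (hfi : ∀ j, f j * f j = f j)
    (d k' D : ℕ) (hd : 1 ≤ d) (hk' : 1 ≤ k') (hD : D = d * k')
    (μ : ℝ) (hμ0 : 0 ≤ μ) (hμ1 : μ ≤ 1)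
    (H1 : Filter.Tendsto (fun n : ℕ => (1 / (n : ℝ)) * ∑ j ∈ range n, f j) atTop (nhds μ))
    (H2 : ∀ t : ℕ, 1 ≤ t →
      Filter.Tendsto (fun n : ℕ => (1 / (n : ℝ)) * ∑ j ∈ range n, f j * f (j + t * D))
        atTop (nhds (μ * μ))) :
    Filter.Tendsto (fun n : ℕ => (1 / (n : ℝ)) * ∑ i ∈ range n, f (i * d))
      atTop (nhds μ) := by
  have hb : ∀ j, |f j| ≤ 1 := fun j => abs_le.2 ⟨by linarith [hf0 j], hf1 j⟩
  -- pairwise limits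
  have hpair : ∀ t t' : ℕ,
      Filter.Tendsto (fun n : ℕ => (1 / (n : ℝ)) * ∑ j ∈ range n, f (j + t * D) * f (j + t' * D))
        atTop (nhds (if t = t' then μ else μ * μ)) := by
    have main : ∀ t t' : ℕ, t < t' →
        Filter.Tendsto (fun n : ℕ => (1 / (n : ℝ)) * ∑ j ∈ range n, f (j + t * D) * f (j + t' * D))
          atTop (nhds (μ * μ)) := by
      intro t t' h
      set g : ℕ → ℝ := fun j => f j * f (j + (t' - t) * D) with hg
      have hgb : ∀ j, |g j| ≤ 1 := by
        intro j
        have h1 := mul_nonneg (hf0 j) (hf0 (j + (t' - t) * D))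
        have h2 := mul_le_one₀ (hf1 j) (hf0 _) (hf1 (j + (t' - t) * D))
        have e : g j = f j * f (j + (t' - t) * D) := rfl
        rw [e]
        exact abs_le.2 ⟨by linarith, h2⟩
      have hbase := H2 (t' - t) (by omega)
      have hshift := cesaro_shift hgb hbase (t * D)
      apply hshift.congr
      intro n
      congr 1
      apply Finset.sum_congr rfl
      intro j _
      have harg : j + t * D + (t' - t) * D = j + t' * D := by
        rw [Nat.add_assoc, ← Nat.add_mul]
        congr 2
        omega
      show f (j + t * D) * f (j + t * D + (t' - t) * D) = _
      rw [harg]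
    intro t t'
    rcases lt_trichotomy t t' with h | h | h
    · rw [if_neg h.ne]; exact main t t' h
    · subst h
      rw [if_pos rfl]
      have := cesaro_shift hb H1 (t * D)
      apply this.congr
      intro n
      congr 1
      exact Finset.sum_congr rfl fun j _ => (hfi _).symm
    · rw [if_neg h.ne']
      have := main t' t h
      apply this.congr
      intro n
      congr 1
      exact Finset.sum_congr rfl fun j _ => mul_comm _ _
  have hDd : 1 ≤ D := by rw [hD]; exact Nat.one_le_iff_ne_zero.2 (by positivity)
  rw [Metric.tendsto_atTop]
  intro ε hε
  -- choose m
  obtain ⟨m₀, hm₀⟩ := exists_nat_gt (9 * (d : ℝ) / ε ^ 2)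
  set m : ℕ := max m₀ 2 with hm
  have hm2 : 2 ≤ m := le_max_right _ _
  have hmR : (2:ℝ) ≤ m := by exact_mod_cast hm2
  have hmpos : (0:ℝ) < m := by linarith
  have hmb : 9 * (d : ℝ) / ε ^ 2 < m := lt_of_lt_of_le hm₀ (by exact_mod_cast le_max_left m₀ 2)
  set W : ℕ → ℝ := fun j => ∑ t ∈ range m, f (j + t * D) with hW
  -- limit of the variance-like quantity
  have hQlim : Filter.Tendsto
      (fun n : ℕ => (1 / (n : ℝ)) * ∑ j ∈ range n, (W j - m * μ) ^ 2)
      atTop (nhds ((m : ℝ) * (μ - μ ^ 2))) := by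
    set E : ℕ → ℝ := fun n =>
      (∑ t ∈ range m, ∑ t' ∈ range m,
        (1 / (n : ℝ)) * ∑ j ∈ range n, f (j + t * D) * f (j + t' * D))
      - 2 * ((m : ℝ) * μ) * (∑ t ∈ range m, (1 / (n : ℝ)) * ∑ j ∈ range n, f (j + t * D))
      + ((m : ℝ) * μ) ^ 2 with hE
    have hElim : Filter.Tendsto E atTop
        (nhds ((∑ t ∈ range m, ∑ t' ∈ range m, (if t = t' then μ else μ * μ))
          - 2 * ((m : ℝ) * μ) * (∑ _t ∈ range m, μ) + ((m : ℝ) * μ) ^ 2)) := by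
      apply Filter.Tendsto.add
      · apply Filter.Tendsto.sub
        · exact tendsto_finset_sum _ fun t _ => tendsto_finset_sum _ fun t' _ => hpair t t'
        · exact (tendsto_finset_sum _ fun t _ => cesaro_shift hb H1 (t * D)).const_mul _
      · exact tendsto_const_nhds
    have hval : (∑ t ∈ range m, ∑ t' ∈ range m, (if t = t' then μ else μ * μ))
        = (m : ℝ) * ((m : ℝ) * (μ * μ) + (μ - μ * μ)) := by
      have hinner : ∀ t ∈ range m, (∑ t' ∈ range m, (if t = t' then μ else μ * μ))
          = (m : ℝ) * (μ * μ) + (μ - μ * μ) := by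
        intro t ht
        have e : ∀ t' : ℕ, (if t = t' then μ else μ * μ)
            = μ * μ + (if t' = t then μ - μ * μ else 0) := by
          intro t'
          by_cases h : t = t'
          · simp [h]
          · rw [if_neg h, if_neg (fun hh => h hh.symm), add_zero]
        rw [Finset.sum_congr rfl fun t' _ => e t', Finset.sum_add_distrib,
          Finset.sum_ite_eq' (range m) t fun _ => μ - μ * μ, if_pos ht,
          Finset.sum_const, card_range, nsmul_eq_mul]
      rw [Finset.sum_congr rfl hinner, Finset.sum_const, card_range, nsmul_eq_mul]
    have hElim2 : Filter.Tendsto E atTop (nhds ((m : ℝ) * (μ - μ ^ 2))) := by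
      have h := hElim
      rw [hval, Finset.sum_const, card_range, nsmul_eq_mul] at h
      have : (m : ℝ) * ((m : ℝ) * (μ * μ) + (μ - μ * μ))
          - 2 * ((m : ℝ) * μ) * ((m : ℝ) * μ) + ((m : ℝ) * μ) ^ 2 = (m : ℝ) * (μ - μ ^ 2) := by
        ring
      rwa [this] at h
    apply hElim2.congr'
    filter_upwards [eventually_ge_atTop 1] with n hn
    have hn0 : ((n:ℝ)) ≠ 0 := by
      have : (1:ℝ) ≤ n := by exact_mod_cast hn
      linarith
    have hsum : ∑ j ∈ range n, (W j - (m : ℝ) * μ) ^ 2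
        = (∑ t ∈ range m, ∑ t' ∈ range m, ∑ j ∈ range n, f (j + t * D) * f (j + t' * D))
          - 2 * ((m : ℝ) * μ) * (∑ t ∈ range m, ∑ j ∈ range n, f (j + t * D))
          + (n : ℝ) * ((m : ℝ) * μ) ^ 2 := by
      have h1 : ∀ j, (W j - (m : ℝ) * μ) ^ 2
          = (∑ t ∈ range m, ∑ t' ∈ range m, f (j + t * D) * f (j + t' * D))
            - 2 * ((m : ℝ) * μ) * (∑ t ∈ range m, f (j + t * D)) + ((m : ℝ) * μ) ^ 2 := by
        intro j
        have e : (W j - (m : ℝ) * μ) ^ 2 = W j * W j - 2 * ((m : ℝ) * μ) * W j + ((m : ℝ) * μ) ^ 2 := by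
          ring
        rw [e, hW]
        rw [Finset.sum_mul_sum]
      rw [Finset.sum_congr rfl fun j _ => h1 j]
      rw [Finset.sum_add_distrib, Finset.sum_sub_distrib, Finset.sum_const, card_range,
        nsmul_eq_mul, ← Finset.mul_sum]
      have h2 : ∑ j ∈ range n, ∑ t ∈ range m, ∑ t' ∈ range m, f (j + t * D) * f (j + t' * D)
          = ∑ t ∈ range m, ∑ t' ∈ range m, ∑ j ∈ range n, f (j + t * D) * f (j + t' * D) := by
        rw [Finset.sum_comm]
        exact Finset.sum_congr rfl fun t _ => Finset.sum_comm
      have h3 : ∑ j ∈ range n, ∑ t ∈ range m, f (j + t * D)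
          = ∑ t ∈ range m, ∑ j ∈ range n, f (j + t * D) := Finset.sum_comm
      rw [h2, h3]
    rw [hE]
    simp only
    rw [hsum]
    have e1 : ∑ t ∈ range m, ∑ t' ∈ range m,
        (1 / (n : ℝ)) * ∑ j ∈ range n, f (j + t * D) * f (j + t' * D)
        = (1 / (n : ℝ)) * ∑ t ∈ range m, ∑ t' ∈ range m, ∑ j ∈ range n,
            f (j + t * D) * f (j + t' * D) := by
      rw [Finset.mul_sum]
      exact Finset.sum_congr rfl fun t _ => by rw [Finset.mul_sum]
    have e2 : ∑ t ∈ range m, (1 / (n : ℝ)) * ∑ j ∈ range n, f (j + t * D)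
        = (1 / (n : ℝ)) * ∑ t ∈ range m, ∑ j ∈ range n, f (j + t * D) := by
      rw [Finset.mul_sum]
    rw [e1, e2]
    field_simp
  -- compose with n ↦ n * d
  have hmul : Filter.Tendsto (fun n : ℕ => n * d) atTop atTop :=
    tendsto_atTop_mono (fun n => Nat.le_mul_of_pos_right n (by omega)) tendsto_id
  have hQd := hQlim.comp hmul
  have hm4 : (m : ℝ) * (μ - μ ^ 2) + 1 ≤ m := by nlinarith
  have hev : ∀ᶠ n : ℕ in atTop,
      ∑ j ∈ range (n * d), (W j - m * μ) ^ 2 ≤ (n : ℝ) * d * m := by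
    have hlt := hQd.eventually_lt_const
      (show (m:ℝ) * (μ - μ^2) < (m:ℝ) * (μ - μ^2) + 1 by linarith)
    filter_upwards [hlt, eventually_ge_atTop 1] with n hQn hn1
    have h1 : (1:ℝ) ≤ n := by exact_mod_cast hn1
    have h2 : (1:ℝ) ≤ d := by exact_mod_cast hd
    have hndR : (0:ℝ) < (n:ℝ) * d := by nlinarith
    have hQn' : (1 / (((n * d : ℕ)) : ℝ)) * ∑ j ∈ range (n * d), (W j - m * μ) ^ 2
        < (m:ℝ) * (μ - μ^2) + 1 := hQn
    have hcast : (((n * d : ℕ)) : ℝ) = (n:ℝ) * d := by push_cast; ring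
    rw [hcast] at hQn'
    calc ∑ j ∈ range (n * d), (W j - ↑m * μ) ^ 2
        = ((n:ℝ) * d) * ((1 / ((n:ℝ) * d)) * ∑ j ∈ range (n * d), (W j - ↑m * μ) ^ 2) := by
          field_simp
      _ ≤ ((n:ℝ) * d) * ↑m := by
          apply mul_le_mul_of_nonneg_left _ hndR.le
          exact le_trans hQn'.le hm4
  set ε₂ : ℝ := ↑m * ε / 3 with hε₂
  have hε₂pos : 0 < ε₂ := by rw [hε₂]; positivity
  obtain ⟨N₂, hN₂⟩ := exists_nat_gt (6 * (m:ℝ) * k' / ε)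
  rw [eventually_atTop] at hev
  obtain ⟨N₁, hN₁⟩ := hev
  refine ⟨max N₁ (max N₂ 1), fun n hn => ?_⟩
  have hn1 : 1 ≤ n := le_trans (le_trans (le_max_right _ _) (le_max_right _ _)) hn
  have hnN₁ := hN₁ n (le_trans (le_max_left _ _) hn)
  have hnN₂ : N₂ ≤ n := le_trans (le_trans (le_max_left _ _) (le_max_right _ _)) hn
  have hnN₂R : 6 * (m:ℝ) * k' / ε < n :=
    lt_of_lt_of_le hN₂ (by exact_mod_cast hnN₂)
  have hnR : (0:ℝ) < n := by
    have : (1:ℝ) ≤ n := by exact_mod_cast hn1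
    linarith
  have hdR : (1:ℝ) ≤ d := by exact_mod_cast hd
  -- (A)
  have harg : ∀ i t : ℕ, i * d + t * D = (i + t * k') * d := by
    intro i t; rw [hD]; ring
  have hA : |(∑ i ∈ range n, W (i * d)) - (m:ℝ) * ∑ i ∈ range n, f (i * d)|
      ≤ 2 * (m:ℝ)^2 * (k':ℝ) := by
    have hWsum : ∑ i ∈ range n, W (i * d)
        = ∑ t ∈ range m, ∑ i ∈ range n, f (i * d + t * D) := Finset.sum_comm
    have e0 : (m:ℝ) * ∑ i ∈ range n, f (i * d)
        = ∑ _t ∈ range m, ∑ i ∈ range n, f (i * d) := by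
      rw [Finset.sum_const, card_range, nsmul_eq_mul]
    rw [hWsum, e0, ← Finset.sum_sub_distrib]
    calc |∑ t ∈ range m, ((∑ i ∈ range n, f (i * d + t * D)) - ∑ i ∈ range n, f (i * d))|
        ≤ ∑ t ∈ range m,
            |(∑ i ∈ range n, f (i * d + t * D)) - ∑ i ∈ range n, f (i * d)| :=
          Finset.abs_sum_le_sum_abs _ _
      _ ≤ ∑ _t ∈ range m, 2 * ((m:ℝ) * k') := by
          apply Finset.sum_le_sum
          intro t ht
          have e1 : ∑ i ∈ range n, f (i * d + t * D)
              = ∑ i ∈ range n, (fun i => f (i * d)) (i + t * k') :=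
            Finset.sum_congr rfl fun i _ => by rw [harg]
          rw [e1]
          refine le_trans (sum_shift_abs (fun i => f (i * d)) 1 (fun j => hb _) (t * k') n) ?_
          have htm : (t:ℝ) ≤ m := le_of_lt (by exact_mod_cast mem_range.1 ht)
          have hk'R : (0:ℝ) ≤ k' := by positivity
          have : ((t * k' : ℕ) : ℝ) = (t:ℝ) * k' := by push_cast; ring
          rw [this]
          nlinarith
      _ = 2 * (m:ℝ)^2 * k' := by
          rw [Finset.sum_const, card_range, nsmul_eq_mul]; ring
  -- (B)
  have hB : |(∑ i ∈ range n, W (i * d)) - (n:ℝ) * ((m:ℝ) * μ)|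
      ≤ (n:ℝ) * ε₂ + (1 / ε₂) * ((n:ℝ) * d * m) := by
    have e0 : (∑ i ∈ range n, W (i * d)) - (n:ℝ) * ((m:ℝ) * μ)
        = ∑ i ∈ range n, (W (i * d) - (m:ℝ) * μ) := by
      rw [Finset.sum_sub_distrib, Finset.sum_const, card_range, nsmul_eq_mul]
    rw [e0]
    have hsub : ∑ i ∈ range n, (W (i * d) - (m:ℝ) * μ) ^ 2
        ≤ ∑ j ∈ range (n * d), (W j - (m:ℝ) * μ) ^ 2 := by
      have himg : ∑ i ∈ range n, (W (i * d) - (m:ℝ) * μ) ^ 2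
          = ∑ j ∈ (range n).image (· * d), (W j - (m:ℝ) * μ) ^ 2 := by
        rw [Finset.sum_image]
        intro x _ y _ h
        exact Nat.eq_of_mul_eq_mul_right (by omega) h
      rw [himg]
      apply Finset.sum_le_sum_of_subset_of_nonneg
      · intro j hj
        obtain ⟨i, hi, rfl⟩ := Finset.mem_image.1 hj
        exact mem_range.2 ((Nat.mul_lt_mul_right (show 0 < d from hd)).2 (mem_range.1 hi))
      · intros; positivity
    calc |∑ i ∈ range n, (W (i * d) - (m:ℝ) * μ)|
        ≤ ∑ i ∈ range n, |W (i * d) - (m:ℝ) * μ| := Finset.abs_sum_le_sum_abs _ _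
      _ ≤ ∑ i ∈ range n, (ε₂ + (W (i * d) - (m:ℝ) * μ) ^ 2 / ε₂) :=
          Finset.sum_le_sum fun i _ => abs_le_eps_add_sq _ _ hε₂pos
      _ = (n:ℝ) * ε₂ + (1 / ε₂) * ∑ i ∈ range n, (W (i * d) - (m:ℝ) * μ) ^ 2 := by
          rw [Finset.sum_add_distrib, Finset.sum_const, card_range, nsmul_eq_mul,
            ← Finset.sum_div]
          rw [one_div, inv_mul_eq_div]
      _ = (n:ℝ) * ε₂ + (1 / ε₂) * ∑ i ∈ range n, (W (i * d) - (m:ℝ) * μ) ^ 2 := by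
          rw [one_div, inv_mul_eq_div]
      _ ≤ (n:ℝ) * ε₂ + (1 / ε₂) * ((n:ℝ) * d * m) := by
          gcongr
          exact le_trans hsub hnN₁
  -- (C)
  have hC : |(m:ℝ) * (∑ i ∈ range n, f (i * d)) - (n:ℝ) * ((m:ℝ) * μ)|
      ≤ 2 * (m:ℝ)^2 * k' + ((n:ℝ) * ε₂ + (1 / ε₂) * ((n:ℝ) * d * m)) := by
    have e : (m:ℝ) * (∑ i ∈ range n, f (i * d)) - (n:ℝ) * ((m:ℝ) * μ)
        = ((m:ℝ) * (∑ i ∈ range n, f (i * d)) - ∑ i ∈ range n, W (i * d))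
          + ((∑ i ∈ range n, W (i * d)) - (n:ℝ) * ((m:ℝ) * μ)) := by ring
    rw [e]
    refine le_trans (abs_add_le _ _) (add_le_add ?_ hB)
    rw [abs_sub_comm]
    exact hA
  -- (D)
  rw [Real.dist_eq]
  have e : (1 / (n:ℝ)) * (∑ i ∈ range n, f (i * d)) - μ
      = ((m:ℝ) * (∑ i ∈ range n, f (i * d)) - (n:ℝ) * ((m:ℝ) * μ)) / ((n:ℝ) * m) := by
    field_simp
  rw [e, abs_div, abs_of_pos (mul_pos hnR hmpos), div_lt_iff₀ (mul_pos hnR hmpos)]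
  refine lt_of_le_of_lt hC ?_
  have key1 : 6 * (m:ℝ) * k' < (n:ℝ) * ε := by
    rw [div_lt_iff₀ hε] at hnN₂R
    linarith
  have key2 : 9 * (d:ℝ) < (m:ℝ) * ε ^ 2 := by
    rw [div_lt_iff₀ (by positivity : (0:ℝ) < ε ^ 2)] at hmb
    linarith
  have e2 : (1 / ε₂) * ((n:ℝ) * d * m) = 3 * (n:ℝ) * d / ε := by
    rw [hε₂]
    field_simp
  rw [e2, hε₂]
  have key3 : 3 * (n:ℝ) * d / ε < (n:ℝ) * m * ε / 3 := by
    rw [div_lt_div_iff₀ hε (by norm_num : (0:ℝ) < 3)]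
    nlinarith [mul_lt_mul_of_pos_left key2 hnR]
  have key4 : 2 * (m:ℝ)^2 * k' < (n:ℝ) * m * ε / 3 := by
    nlinarith [mul_lt_mul_of_pos_left key1 (show (0:ℝ) < (m:ℝ)/3 by linarith)]
  have e3 : (n:ℝ) * ((m:ℝ) * ε / 3) = (n:ℝ) * m * ε / 3 := by ring
  rw [e3]
  have : ε * ((n:ℝ) * m) = (n:ℝ) * m * ε / 3 + (n:ℝ) * m * ε / 3 + (n:ℝ) * m * ε / 3 := by ring
  rw [this]
  linarith


set_option maxHeartbeats 1000000 in
lemma theorem_main (v : ℕ → ℝ) (hv : ∀ n, v n ∈ Set.Icc (0 : ℝ) 1)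
    (hcud : IsCUD v) (d k : ℕ) (hd : 1 ≤ d) (hk : 1 ≤ k)
    (a b : Fin k × Fin d → ℝ)
    (ha : ∀ p, a p ∈ Set.Icc (0 : ℝ) 1) (hb : ∀ p, b p ∈ Set.Icc (0 : ℝ) 1)
    (hab : ∀ p, a p ≤ b p) :
    Filter.Tendsto
      (fun n : ℕ => (1 / (n : ℝ)) *
        ((Finset.range n).filter
          (fun i => ∀ p : Fin k × Fin d,
            a p < v ((i + (p.1 : ℕ)) * d + (p.2 : ℕ)) ∧
              v ((i + (p.1 : ℕ)) * d + (p.2 : ℕ)) ≤ b p)).card)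
      Filter.atTop (nhds (∏ p : Fin k × Fin d, (b p - a p))) := by
  have hd0 : 0 < d := hd
  have hk0 : 0 < k := hk
  set pm : ℕ → Fin k × Fin d :=
    fun m => (⟨m / d % k, Nat.mod_lt _ hk0⟩, ⟨m % d, Nat.mod_lt _ hd0⟩) with hpm
  set a' : ℕ → ℝ := fun m => a (pm m) with ha'
  set b' : ℕ → ℝ := fun m => b (pm m) with hb'
  have pm_e : ∀ p : Fin k × Fin d, pm ((p.1 : ℕ) * d + (p.2 : ℕ)) = p := by
    rintro ⟨⟨i, hi⟩, ⟨j, hj⟩⟩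
    have h1 : (i * d + j) / d = i := by
      rw [Nat.add_comm, Nat.add_mul_div_right _ _ hd0, Nat.div_eq_of_lt hj, Nat.zero_add]
    have h2 : (i * d + j) % d = j := by
      rw [Nat.add_comm, Nat.add_mul_mod_self_right, Nat.mod_eq_of_lt hj]
    simp only [hpm]
    refine Prod.ext (Fin.ext ?_) (Fin.ext ?_)
    · show (i * d + j) / d % k = i
      rw [h1, Nat.mod_eq_of_lt hi]
    · exact h2
  have e_pm : ∀ m, m < k * d → ((pm m).1 : ℕ) * d + ((pm m).2 : ℕ) = m := by
    intro m hm
    have h1 : m / d < k := (Nat.div_lt_iff_lt_mul hd0).2 hm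
    show m / d % k * d + m % d = m
    rw [Nat.mod_eq_of_lt h1, Nat.mul_comm, Nat.div_add_mod]
  have hlt : ∀ p : Fin k × Fin d, (p.1 : ℕ) * d + (p.2 : ℕ) < k * d := by
    intro p
    calc (p.1 : ℕ) * d + (p.2 : ℕ) < (p.1 : ℕ) * d + d := by
          have := p.2.isLt; omega
      _ = ((p.1 : ℕ) + 1) * d := by ring
      _ ≤ k * d := Nat.mul_le_mul_right d p.1.isLt
  have hbounds : ∀ m : ℕ, 0 ≤ a' m ∧ a' m ≤ b' m ∧ b' m ≤ 1 :=
    fun m => ⟨(ha _).1, hab _, (hb _).2⟩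
  set f : ℕ → ℝ := fun j => ∏ m ∈ range (k * d), ind (a' m) (b' m) (v (j + m)) with hf
  set μ : ℝ := ∏ m ∈ range (k * d), (b' m - a' m) with hμ
  have hkd1 : 1 ≤ k * d := Nat.mul_pos hk0 hd0
  have hf0 : ∀ j, 0 ≤ f j := fun j => Finset.prod_nonneg fun m _ => ind_nonneg _ _ _
  have hf1 : ∀ j, f j ≤ 1 := fun j =>
    Finset.prod_le_one (fun m _ => ind_nonneg _ _ _) (fun m _ => ind_le_one _ _ _)
  have hfboole : ∀ j, f j =
      if (∀ m ∈ range (k * d), a' m < v (j + m) ∧ v (j + m) ≤ b' m) then (1:ℝ) else 0 := by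
    intro j
    rw [hf]
    exact Finset.prod_boole
  have hfi : ∀ j, f j * f j = f j := by
    intro j
    rw [hfboole j]
    split_ifs <;> norm_num
  have hμ0 : 0 ≤ μ := Finset.prod_nonneg fun m _ => by
    have := hbounds m; linarith [this.2.1]
  have hμ1 : μ ≤ 1 := Finset.prod_le_one
    (fun m _ => by have := hbounds m; linarith [this.2.1])
    (fun m _ => by have := hbounds m; linarith [this.1, this.2.2])
  have H1 : Filter.Tendsto (fun n : ℕ => (1 / (n : ℝ)) * ∑ j ∈ range n, f j)
      atTop (nhds μ) :=
    stepA v hv hcud (k * d) hkd1 a' b' (fun m _ => hbounds m)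
  have H2 : ∀ t : ℕ, 1 ≤ t →
      Filter.Tendsto (fun n : ℕ => (1 / (n : ℝ)) * ∑ j ∈ range n, f j * f (j + t * (k * d)))
        atTop (nhds (μ * μ)) := by
    intro t ht
    obtain ⟨t', rfl⟩ : ∃ t', t = t' + 1 := ⟨t - 1, by omega⟩
    set T : ℕ := (t' + 1) * (k * d) with hT
    set A2 : ℕ → ℝ := fun m => if m < k * d then a' m else if m < T then 0 else a' (m - T)
      with hA2
    set B2 : ℕ → ℝ := fun m => if m < k * d then b' m else if m < T then 1 else b' (m - T)
      with hB2
    set g2 : ℕ → ℝ := fun j => ∏ m ∈ range (T + k * d), ind (A2 m) (B2 m) (v (j + m))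
      with hg2def
    have hbounds2 : ∀ m, m < T + k * d → 0 ≤ A2 m ∧ A2 m ≤ B2 m ∧ B2 m ≤ 1 := by
      intro m _
      rw [hA2, hB2]
      simp only
      split_ifs with h1 h2
      · exact hbounds m
      · norm_num
      · exact hbounds (m - T)
    have hdim : 1 ≤ T + k * d := by omega
    have hstep := stepA v hv hcud (T + k * d) hdim A2 B2 hbounds2
    have hTsplit : T = k * d + t' * (k * d) := by rw [hT]; ring
    have hkdT : k * d ≤ T := by rw [hT]; exact Nat.le_mul_of_pos_left _ (by omega)
    -- the limit value is μ * μ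
    have hval2 : ∏ m ∈ range (T + k * d), (B2 m - A2 m) = μ * μ := by
      rw [Finset.prod_range_add]
      have hlast : ∏ x ∈ range (k * d), (B2 (T + x) - A2 (T + x)) = μ := by
        rw [hμ]
        apply Finset.prod_congr rfl
        intro x hx
        have h1 : ¬ (T + x < k * d) := by omega
        have h2 : ¬ (T + x < T) := by omega
        rw [hA2, hB2]
        simp only [h1, if_false, h2, Nat.add_sub_cancel_left]
      have hfirst : ∏ m ∈ range T, (B2 m - A2 m) = μ * 1 := by
        rw [hTsplit, Finset.prod_range_add]
        have hfst : ∏ x ∈ range (k * d), (B2 x - A2 x) = μ := by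
          rw [hμ]
          apply Finset.prod_congr rfl
          intro x hx
          rw [hA2, hB2]
          simp only [mem_range.1 hx, if_true]
        have hmid : ∏ x ∈ range (t' * (k * d)), (B2 (k * d + x) - A2 (k * d + x)) = 1 := by
          apply Finset.prod_eq_one
          intro x hx
          have hx' := mem_range.1 hx
          have h1 : ¬ (k * d + x < k * d) := by omega
          have h2 : k * d + x < T := by
            rw [hTsplit]
            exact Nat.add_lt_add_left hx' _
          rw [hA2, hB2]
          simp only [h1, if_false, h2, if_true]
          norm_num
        rw [hfst, hmid]
      rw [hfirst, hlast]
      ring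
    -- decompose g2
    have hg2 : ∀ j, g2 j
        = (f j * ∏ x ∈ range (t' * (k * d)), ind 0 1 (v (j + (k * d + x)))) * f (j + T) := by
      intro j
      rw [hg2def]
      simp only
      rw [Finset.prod_range_add]
      congr 1
      · rw [hTsplit, Finset.prod_range_add]
        congr 1
        · rw [hf]
          apply Finset.prod_congr rfl
          intro x hx
          rw [hA2, hB2]
          simp only [mem_range.1 hx, if_true]
        · apply Finset.prod_congr rfl
          intro x hx
          have hx' := mem_range.1 hx
          have h1 : ¬ (k * d + x < k * d) := by omega
          have h2 : k * d + x < T := by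
            rw [hTsplit]
            exact Nat.add_lt_add_left hx' _
          rw [hA2, hB2]
          simp only [h1, if_false, h2, if_true]
      · rw [hf]
        apply Finset.prod_congr rfl
        intro x hx
        have hx' := mem_range.1 hx
        have h1 : ¬ (T + x < k * d) := by omega
        have h2 : ¬ (T + x < T) := by omega
        have harg : j + (T + x) = (j + T) + x := by omega
        rw [hA2, hB2, harg]
        simp only [h1, if_false, h2, Nat.add_sub_cancel_left]
    -- difference bound
    have hdiffb : ∀ j, 0 ≤ f j * f (j + T) - g2 j ∧
        f j * f (j + T) - g2 j
          ≤ ∑ x ∈ range (t' * (k * d)), (if v (j + (k * d + x)) = 0 then (1:ℝ) else 0) := by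
      intro j
      have hM0 : 0 ≤ ∏ x ∈ range (t' * (k * d)), ind 0 1 (v (j + (k * d + x))) :=
        Finset.prod_nonneg fun x _ => ind_nonneg _ _ _
      have hM1 : (∏ x ∈ range (t' * (k * d)), ind 0 1 (v (j + (k * d + x)))) ≤ 1 :=
        Finset.prod_le_one (fun x _ => ind_nonneg _ _ _) (fun x _ => ind_le_one _ _ _)
      have h1sub : 1 - (∏ x ∈ range (t' * (k * d)), ind 0 1 (v (j + (k * d + x))))
          ≤ ∑ x ∈ range (t' * (k * d)), (1 - ind 0 1 (v (j + (k * d + x)))) :=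
        one_sub_prod_le _ _ (fun x _ => ind_nonneg _ _ _) (fun x _ => ind_le_one _ _ _)
      have hzz : ∀ x ∈ range (t' * (k * d)),
          1 - ind 0 1 (v (j + (k * d + x)))
            = (if v (j + (k * d + x)) = 0 then (1:ℝ) else 0) := by
        intro x _
        have := zind_add_ind (v (j + (k * d + x))) (hv _)
        linarith
      rw [hg2 j]
      set M := ∏ x ∈ range (t' * (k * d)), ind 0 1 (v (j + (k * d + x))) with hM
      constructor
      · have e : f j * f (j + T) - (f j * M) * f (j + T) = (f j * f (j + T)) * (1 - M) := by
          ring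
        rw [e]
        exact mul_nonneg (mul_nonneg (hf0 _) (hf0 _)) (by linarith)
      · calc f j * f (j + T) - (f j * M) * f (j + T) = (f j * f (j + T)) * (1 - M) := by ring
          _ ≤ 1 * (1 - M) := by
              apply mul_le_mul_of_nonneg_right _ (by linarith)
              exact mul_le_one₀ (hf1 _) (hf0 _) (hf1 _)
          _ = 1 - M := one_mul _
          _ ≤ ∑ x ∈ range (t' * (k * d)), (if v (j + (k * d + x)) = 0 then (1:ℝ) else 0) :=
              le_trans h1sub (le_of_eq (Finset.sum_congr rfl hzz))
    -- error term tends to zero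
    have herr : Filter.Tendsto
        (fun n : ℕ => (1 / (n : ℝ)) * ∑ j ∈ range n, (f j * f (j + T) - g2 j))
        atTop (nhds 0) := by
      apply squeeze_zero (g := fun n : ℕ => ∑ x ∈ range (t' * (k * d)),
        ((1 / (n : ℝ)) * ∑ j ∈ range n, (if v (j + (k * d + x)) = 0 then (1:ℝ) else 0)))
      · intro n
        apply mul_nonneg (by positivity)
        exact Finset.sum_nonneg fun j _ => (hdiffb j).1
      · intro n
        have hstep1 : ∑ j ∈ range n, (f j * f (j + T) - g2 j)
            ≤ ∑ j ∈ range n, ∑ x ∈ range (t' * (k * d)),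
                (if v (j + (k * d + x)) = 0 then (1:ℝ) else 0) :=
          Finset.sum_le_sum fun j _ => (hdiffb j).2
        calc (1 / (n : ℝ)) * ∑ j ∈ range n, (f j * f (j + T) - g2 j)
            ≤ (1 / (n : ℝ)) * ∑ j ∈ range n, ∑ x ∈ range (t' * (k * d)),
                (if v (j + (k * d + x)) = 0 then (1:ℝ) else 0) := by
              apply mul_le_mul_of_nonneg_left hstep1 (by positivity)
          _ = ∑ x ∈ range (t' * (k * d)),
                ((1 / (n : ℝ)) * ∑ j ∈ range n, (if v (j + (k * d + x)) = 0 then (1:ℝ) else 0)) := by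
              rw [Finset.sum_comm, Finset.mul_sum]
      · have hz : ∀ x : ℕ, Filter.Tendsto
            (fun n : ℕ => (1 / (n : ℝ)) * ∑ j ∈ range n,
              (if v (j + (k * d + x)) = 0 then (1:ℝ) else 0))
            atTop (nhds 0) := by
          intro x
          exact cesaro_shift (g := fun j => if v j = 0 then (1:ℝ) else 0)
            (fun j => by by_cases h : v j = 0 <;> simp [h]) (zeros v hv hcud) (k * d + x)
        have := tendsto_finset_sum (range (t' * (k * d))) (fun x _ => hz x)
        simpa using this
    rw [hval2] at hstep
    have hcomb := hstep.add herr
    rw [add_zero] at hcomb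
    apply hcomb.congr
    intro n
    rw [← mul_add, ← Finset.sum_add_distrib]
    congr 1
    apply Finset.sum_congr rfl
    intro j _
    ring
  -- apply strided
  have hmain := strided f hf0 hf1 hfi d k (k * d) hd hk (by ring) μ hμ0 hμ1 H1 H2
  -- convert to the card statement
  have hprodeq : ∏ p : Fin k × Fin d, (b p - a p) = μ := by
    rw [hμ]
    apply Finset.prod_bij' (i := fun (p : Fin k × Fin d) (_ : p ∈ Finset.univ) =>
        (p.1 : ℕ) * d + (p.2 : ℕ))
      (j := fun (m : ℕ) (_ : m ∈ range (k * d)) => pm m)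
    · intro p _
      exact mem_range.2 (hlt p)
    · intro m _
      exact Finset.mem_univ _
    · intro p _
      exact pm_e p
    · intro m hm
      exact e_pm m (mem_range.1 hm)
    · intro p _
      simp only [ha', hb', pm_e p]
  have hcond : ∀ i : ℕ,
      (∀ p : Fin k × Fin d,
        a p < v ((i + (p.1 : ℕ)) * d + (p.2 : ℕ)) ∧
          v ((i + (p.1 : ℕ)) * d + (p.2 : ℕ)) ≤ b p)
      ↔ (∀ m ∈ range (k * d), a' m < v (i * d + m) ∧ v (i * d + m) ≤ b' m) := by
    intro i
    constructor
    · intro h m hm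
      have hm' := mem_range.1 hm
      have hh := h (pm m)
      have harg : (i + ((pm m).1 : ℕ)) * d + ((pm m).2 : ℕ) = i * d + m := by
        have he := e_pm m hm'
        calc (i + ((pm m).1 : ℕ)) * d + ((pm m).2 : ℕ)
            = i * d + (((pm m).1 : ℕ) * d + ((pm m).2 : ℕ)) := by ring
          _ = i * d + m := by rw [he]
      rw [harg] at hh
      exact hh
    · intro h p
      have hm := hlt p
      have hh := h ((p.1 : ℕ) * d + (p.2 : ℕ)) (mem_range.2 hm)
      have harg : i * d + ((p.1 : ℕ) * d + (p.2 : ℕ)) = (i + (p.1 : ℕ)) * d + (p.2 : ℕ) := by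
        ring
      rw [harg] at hh
      have hae : a' ((p.1 : ℕ) * d + (p.2 : ℕ)) = a p := by
        show a (pm ((p.1 : ℕ) * d + (p.2 : ℕ))) = a p
        rw [pm_e p]
      have hbe : b' ((p.1 : ℕ) * d + (p.2 : ℕ)) = b p := by
        show b (pm ((p.1 : ℕ) * d + (p.2 : ℕ))) = b p
        rw [pm_e p]
      rw [hae, hbe] at hh
      exact hh
  rw [hprodeq]
  apply hmain.congr
  intro n
  congr 1
  have hcards : ∀ i ∈ range n, f (i * d)
      = if (∀ p : Fin k × Fin d,
          a p < v ((i + (p.1 : ℕ)) * d + (p.2 : ℕ)) ∧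
            v ((i + (p.1 : ℕ)) * d + (p.2 : ℕ)) ≤ b p) then (1:ℝ) else 0 := by
    intro i _
    rw [hfboole (i * d)]
    have : ∀ m, i * d + m = i * d + m := fun _ => rfl
    rw [if_congr (Iff.symm (hcond i)) rfl rfl]
  rw [Finset.sum_congr rfl hcards]
  rw [Finset.sum_boole]

/-- Uniform distribution of stacked blocks of a CUD sequence: if `(v_n)` is CUD in
`[0,1]`, `d ≥ 1` and `k ≥ 1`, and `x_i ∈ [0,1]^{d·k}` has `(j,l)`-th coordinate
`v_{(i+j)·d + l}` (stacking `k` consecutive non-overlapping `d`-blocks starting at block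
`i`), then for all `a ≤ b` in `[0,1]^{d·k}` the proportion of `i < n` with
`x_i ∈ (a, b]` converges to `∏ (b − a)`. -/
theorem cud_stacked_blocks (v : ℕ → ℝ) (hv : ∀ n, v n ∈ Set.Icc (0 : ℝ) 1)
    (hcud : IsCUD v) (d k : ℕ) (hd : 1 ≤ d) (hk : 1 ≤ k)
    (a b : Fin k × Fin d → ℝ)
    (ha : ∀ p, a p ∈ Set.Icc (0 : ℝ) 1) (hb : ∀ p, b p ∈ Set.Icc (0 : ℝ) 1)
    (hab : ∀ p, a p ≤ b p) :
    Filter.Tendsto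
      (fun n : ℕ => (1 / (n : ℝ)) *
        ((Finset.range n).filter
          (fun i => ∀ p : Fin k × Fin d,
            a p < v ((i + (p.1 : ℕ)) * d + (p.2 : ℕ)) ∧
              v ((i + (p.1 : ℕ)) * d + (p.2 : ℕ)) ≤ b p)).card)
      Filter.atTop (nhds (∏ p : Fin k × Fin d, (b p - a p))) := by
  exact theorem_main v hv hcud d k hd hk a b ha hb hab
end

section
/- If the liminf of the empirical rectangle frequencies of a sequence dominates the rectangle volumes, then the frequencies converge to the volumes: let D ≥ 1 and let (x_i)_{i≥0} be a sequence of points in [0,1]^D such that for every pair a, b ∈ [0,1]^D with a ≤ b coordinatewise, liminf_{n→∞} (1/n) · #{0 ≤ i < n : a_m < (x_i)_m ≤ b_m for every coordinate m} ≥ ∏_{m=1}^D (b_m − a_m). Then for every such pair a, b the limit exists and lim_{n→∞} (1/n) · #{0 ≤ i < n : a_m < (x_i)_m ≤ b_m for every m} = ∏_{m=1}^D (b_m − a_m). -/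
open scoped Classical

open Filter Finset

/-- Superadditivity of liminf over finite sums of `[0,1]`-valued sequences. -/
private lemma sum_liminf_le {σ : Type*} (S : Finset σ) (u : σ → ℕ → ℝ) (v : σ → ℝ)
    (h0 : ∀ s, ∀ n, 0 ≤ u s n) (h1 : ∀ s, ∀ n, u s n ≤ 1)
    (hv : ∀ s ∈ S, v s ≤ Filter.liminf (u s) Filter.atTop) :
    ∑ s ∈ S, v s ≤ Filter.liminf (fun n => ∑ s ∈ S, u s n) Filter.atTop := by
  classical
  induction S using Finset.induction with
  | empty => simp [Filter.liminf_const]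
  | @insert a S ha ih =>
    have hSge : ∀ n, (0:ℝ) ≤ ∑ s ∈ S, u s n :=
      fun n => Finset.sum_nonneg fun s _ => h0 s n
    have hSle : ∀ n, ∑ s ∈ S, u s n ≤ (S.card : ℝ) :=
      fun n => by
        calc ∑ s ∈ S, u s n ≤ ∑ _s ∈ S, (1:ℝ) :=
              Finset.sum_le_sum fun s _ => h1 s n
          _ = (S.card : ℝ) := by simp
    have key : Filter.liminf (u a) Filter.atTop
          + Filter.liminf (fun n => ∑ s ∈ S, u s n) Filter.atTop
        ≤ Filter.liminf (fun n => u a n + ∑ s ∈ S, u s n) Filter.atTop := by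
      have := le_liminf_add (f := Filter.atTop) (u := u a)
        (v := fun n => ∑ s ∈ S, u s n)
        (Filter.isBoundedUnder_of ⟨0, fun n => h0 a n⟩)
        (Filter.isBoundedUnder_of ⟨1, fun n => h1 a n⟩)
        (Filter.isBoundedUnder_of ⟨0, fun n => hSge n⟩)
        (Filter.IsBoundedUnder.isCoboundedUnder_ge
          (Filter.isBoundedUnder_of ⟨(S.card : ℝ), fun n => hSle n⟩))
      simpa [Pi.add_def] using this
    rw [Finset.sum_insert ha]
    have hsum := ih (fun s hs => hv s (Finset.mem_insert_of_mem hs))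
    have hva := hv a (Finset.mem_insert_self a S)
    calc v a + ∑ s ∈ S, v s
        ≤ Filter.liminf (u a) Filter.atTop
            + Filter.liminf (fun n => ∑ s ∈ S, u s n) Filter.atTop :=
          add_le_add hva hsum
      _ ≤ Filter.liminf (fun n => u a n + ∑ s ∈ S, u s n) Filter.atTop := key
      _ = Filter.liminf (fun n => ∑ s ∈ insert a S, u s n) Filter.atTop := by
          simp [Finset.sum_insert ha]

/-- If the liminf of the empirical rectangle frequencies of a sequence of points in
`[0,1]^D` dominates the rectangle volumes for every half-open rectangle `(a, b]` with
`a ≤ b` in `[0,1]^D`, then for every such rectangle the frequencies actually converge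
to the volume `∏ₘ (bₘ − aₘ)`. -/
theorem liminf_rect_freq_to_limit (D : ℕ) (hD : 1 ≤ D) (x : ℕ → Fin D → ℝ)
    (hx : ∀ i, x i ∈ Set.Icc (0 : Fin D → ℝ) 1)
    (hliminf : ∀ a b : Fin D → ℝ,
      a ∈ Set.Icc (0 : Fin D → ℝ) 1 → b ∈ Set.Icc (0 : Fin D → ℝ) 1 → a ≤ b →
      (∏ m, (b m - a m)) ≤
        Filter.liminf
          (fun n : ℕ => (1 / (n : ℝ)) *
            ((Finset.range n).filter
              (fun i => ∀ m, a m < x i m ∧ x i m ≤ b m)).card)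
          Filter.atTop) :
    ∀ a b : Fin D → ℝ,
      a ∈ Set.Icc (0 : Fin D → ℝ) 1 → b ∈ Set.Icc (0 : Fin D → ℝ) 1 → a ≤ b →
      Filter.Tendsto
        (fun n : ℕ => (1 / (n : ℝ)) *
          ((Finset.range n).filter
            (fun i => ∀ m, a m < x i m ∧ x i m ≤ b m)).card)
        Filter.atTop (nhds (∏ m, (b m - a m))) := by
  intro a b ha hb hab
  -- endpoints of the three intervals at each coordinate
  set lo : Fin D → Fin 3 → ℝ :=
    fun m j => if j.val = 0 then 0 else if j.val = 1 then a m else b m with hlo_def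
  set hi : Fin D → Fin 3 → ℝ :=
    fun m j => if j.val = 0 then a m else if j.val = 1 then b m else 1 with hhi_def
  -- the empirical frequency of rectangle labelled by `s`
  set freq : (Fin D → Fin 3) → ℕ → ℝ := fun s n =>
    (1 / (n : ℝ)) * ((Finset.range n).filter
      (fun i => ∀ m, lo m (s m) < x i m ∧ x i m ≤ hi m (s m))).card with hfreq_def
  set mid : Fin D → Fin 3 := fun _ => 1 with hmid_def
  have hfreq_mid : freq mid = (fun n : ℕ => (1 / (n : ℝ)) *
      ((Finset.range n).filter (fun i => ∀ m, a m < x i m ∧ x i m ≤ b m)).card) := rfl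
  -- ordering facts
  have hkey : ∀ (m : Fin D) (j : Fin 3),
      0 ≤ lo m j ∧ lo m j ≤ hi m j ∧ hi m j ≤ 1 := by
    intro m j
    have h1 := ha.1 m; have h2 := ha.2 m; have h3 := hb.1 m; have h4 := hb.2 m
    have h5 := hab m
    simp only [Pi.zero_apply, Pi.one_apply] at h1 h2 h3 h4
    obtain ⟨jv, hj⟩ := j
    interval_cases jv <;> refine ⟨?_, ?_, ?_⟩ <;>
      simp only [hlo_def, hhi_def, Fin.val_mk] <;>
      · try norm_num
        try linarith
  have horder : ∀ (m : Fin D) (j k : Fin 3), j < k → hi m j ≤ lo m k := by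
    intro m j k hjk
    have h5 := hab m
    obtain ⟨jv, hj⟩ := j
    obtain ⟨kv, hk⟩ := k
    rw [Fin.mk_lt_mk] at hjk
    interval_cases jv <;> interval_cases kv <;>
      · try omega
        simp only [hlo_def, hhi_def, Fin.val_mk]
        try norm_num
        try linarith
  -- frequency bounds
  have hfreq0 : ∀ s n, 0 ≤ freq s n := by
    intro s n
    show 0 ≤ (1 / (n : ℝ)) * ((Finset.range n).filter
      (fun i => ∀ m, lo m (s m) < x i m ∧ x i m ≤ hi m (s m))).card
    positivity
  have hfreq1 : ∀ s n, freq s n ≤ 1 := by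
    intro s n
    show (1 / (n : ℝ)) * (((Finset.range n).filter
      (fun i => ∀ m, lo m (s m) < x i m ∧ x i m ≤ hi m (s m))).card : ℝ) ≤ 1
    rcases Nat.eq_zero_or_pos n with rfl | hn
    · simp
    · have hn' : (0:ℝ) < n := by exact_mod_cast hn
      have hcard : (((Finset.range n).filter
          (fun i => ∀ m, lo m (s m) < x i m ∧ x i m ≤ hi m (s m))).card : ℝ) ≤ n := by
        exact_mod_cast (Finset.card_filter_le _ _).trans_eq (Finset.card_range n)
      rw [div_mul_eq_mul_div, one_mul, div_le_one hn']
      exact hcard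
  -- the liminf hypothesis applies to each labelled rectangle
  have hlb : ∀ s : Fin D → Fin 3,
      (∏ m, (hi m (s m) - lo m (s m))) ≤ Filter.liminf (freq s) Filter.atTop := by
    intro s
    exact hliminf (fun m => lo m (s m)) (fun m => hi m (s m))
      ⟨fun m => (hkey m (s m)).1,
        fun m => ((hkey m (s m)).2.1).trans (hkey m (s m)).2.2⟩
      ⟨fun m => (hkey m (s m)).1.trans (hkey m (s m)).2.1,
        fun m => (hkey m (s m)).2.2⟩
      (fun m => (hkey m (s m)).2.1)
  -- total volume is 1
  have hvol : ∑ s : Fin D → Fin 3, ∏ m, (hi m (s m) - lo m (s m)) = 1 := by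
    have h := Finset.prod_univ_sum (fun _ : Fin D => (Finset.univ : Finset (Fin 3)))
      (fun m j => hi m j - lo m j)
    rw [Fintype.piFinset_univ] at h
    rw [← h]
    have hone : ∀ m : Fin D, ∑ j : Fin 3, (hi m j - lo m j) = 1 := by
      intro m
      rw [Fin.sum_univ_three]
      simp only [hlo_def, hhi_def]
      norm_num
    simp [hone]
  -- disjointness: total counts bounded by n
  have hdisj : ∀ n : ℕ, ∑ s : Fin D → Fin 3,
      ((Finset.range n).filter
        (fun i => ∀ m, lo m (s m) < x i m ∧ x i m ≤ hi m (s m))).card ≤ n := by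
    intro n
    rw [← Finset.card_biUnion]
    · calc (Finset.univ.biUnion fun s : Fin D → Fin 3 =>
            (Finset.range n).filter
              (fun i => ∀ m, lo m (s m) < x i m ∧ x i m ≤ hi m (s m))).card
          ≤ (Finset.range n).card :=
            Finset.card_le_card (Finset.biUnion_subset.2
              fun s _ => Finset.filter_subset _ _)
        _ = n := Finset.card_range n
    · intro s _ t _ hst
      rw [Function.onFun, Finset.disjoint_left]
      intro i hi1 hi2
      rw [Finset.mem_filter] at hi1 hi2
      obtain ⟨m, hm⟩ := Function.ne_iff.1 hst
      have h1 := hi1.2 m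
      have h2 := hi2.2 m
      rcases hm.lt_or_gt with h | h
      · have := horder m (s m) (t m) h
        linarith [h1.2, h2.1]
      · have := horder m (t m) (s m) h
        linarith [h1.1, h2.2]
  -- the key pointwise inequality
  have hineq : ∀ n : ℕ, 1 ≤ n →
      freq mid n ≤ 1 - ∑ s ∈ Finset.univ.erase mid, freq s n := by
    intro n hn
    have hn' : (0:ℝ) < n := by exact_mod_cast hn
    have hsum : ∑ s : Fin D → Fin 3,
        ((((Finset.range n).filter
          (fun i => ∀ m, lo m (s m) < x i m ∧ x i m ≤ hi m (s m))).card : ℝ))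
        ≤ (n : ℝ) := by
      have := hdisj n
      push_cast [← Nat.cast_sum] at *
      exact_mod_cast this
    have hsplit : freq mid n + ∑ s ∈ Finset.univ.erase mid, freq s n
        = (1 / (n : ℝ)) * ∑ s : Fin D → Fin 3,
            (((Finset.range n).filter
              (fun i => ∀ m, lo m (s m) < x i m ∧ x i m ≤ hi m (s m))).card : ℝ) := by
      rw [Finset.mul_sum]
      exact Finset.add_sum_erase Finset.univ (fun s => freq s n) (Finset.mem_univ mid)
    have hle : (1 / (n : ℝ)) * ∑ s : Fin D → Fin 3,
        (((Finset.range n).filter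
          (fun i => ∀ m, lo m (s m) < x i m ∧ x i m ≤ hi m (s m))).card : ℝ) ≤ 1 := by
      rw [div_mul_eq_mul_div, one_mul, div_le_one hn']
      exact hsum
    rw [← hsplit] at hle
    linarith
  -- liminf of the sum of the other frequencies
  have hsumlb : ∑ s ∈ Finset.univ.erase mid, (∏ m, (hi m (s m) - lo m (s m)))
      ≤ Filter.liminf (fun n => ∑ s ∈ Finset.univ.erase mid, freq s n) Filter.atTop :=
    sum_liminf_le _ freq _ hfreq0 hfreq1 (fun s _ => hlb s)
  -- limsup bound
  have hub : Filter.limsup (freq mid) Filter.atTop ≤ ∏ m, (b m - a m) := by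
    have hmono : Filter.limsup (freq mid) Filter.atTop
        ≤ Filter.limsup (fun n => 1 - ∑ s ∈ Finset.univ.erase mid, freq s n)
            Filter.atTop := by
      apply Filter.limsup_le_limsup
      · filter_upwards [Filter.eventually_ge_atTop 1] with n hn using hineq n hn
      · exact Filter.IsBoundedUnder.isCoboundedUnder_le
          (Filter.isBoundedUnder_of ⟨0, fun n => hfreq0 mid n⟩)
      · exact Filter.isBoundedUnder_of ⟨1, fun n => by
          have : (0:ℝ) ≤ ∑ s ∈ Finset.univ.erase mid, freq s n :=
            Finset.sum_nonneg fun s _ => hfreq0 s n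
          linarith⟩
    have heq : Filter.limsup (fun n => 1 - ∑ s ∈ Finset.univ.erase mid, freq s n)
        Filter.atTop
        = 1 - Filter.liminf (fun n => ∑ s ∈ Finset.univ.erase mid, freq s n)
            Filter.atTop := by
      apply limsup_const_sub
      · exact Filter.IsBoundedUnder.isCoboundedUnder_ge
          (Filter.isBoundedUnder_of ⟨((Finset.univ.erase mid).card : ℝ), fun n => by
            calc ∑ s ∈ Finset.univ.erase mid, freq s n
                ≤ ∑ _s ∈ Finset.univ.erase mid, (1:ℝ) :=
                  Finset.sum_le_sum fun s _ => hfreq1 s n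
              _ = _ := by simp⟩)
      · exact Filter.isBoundedUnder_of ⟨0, fun n =>
          Finset.sum_nonneg fun s _ => hfreq0 s n⟩
    have hmidvol : (∏ m, (hi m (mid m) - lo m (mid m))) = ∏ m, (b m - a m) := rfl
    have herase : ∑ s ∈ Finset.univ.erase mid, (∏ m, (hi m (s m) - lo m (s m)))
        = 1 - ∏ m, (b m - a m) := by
      have h := Finset.add_sum_erase Finset.univ
        (fun s : Fin D → Fin 3 => ∏ m, (hi m (s m) - lo m (s m)))
        (Finset.mem_univ mid)
      rw [hvol, hmidvol] at h
      linarith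
    rw [heq] at hmono
    rw [herase] at hsumlb
    linarith
  -- conclude
  rw [← hfreq_mid]
  refine tendsto_of_le_liminf_of_limsup_le ?_ hub
    (Filter.isBoundedUnder_of ⟨1, fun n => hfreq1 mid n⟩)
    (Filter.isBoundedUnder_of ⟨0, fun n => hfreq0 mid n⟩)
  have h := hlb mid
  rwa [show (∏ m, (hi m (mid m) - lo m (mid m))) = ∏ m, (b m - a m) from rfl] at h
end

section
/- Every sequence of IID uniform random numbers is almost surely completely uniformly distributed: let (Ω, ℱ, P) be a probability space and let (U_n)_{n≥0} be a sequence of independent random variables each distributed uniformly on [0,1] (i.e. the law of each U_n is Lebesgue measure restricted to [0,1]). Then for P-almost every ω ∈ Ω, the sequence (U_n(ω))_{n≥0} is CUD. -/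
open MeasureTheory

open scoped Classical

section Helpers
open Finset

lemma blockIdx_iff {d : ℕ} (hd : 0 < d) (r : ℕ) (hr : r < d) (k n : ℕ) :
    k < (n + d - 1 - r) / d ↔ k * d + r < n := by
  rw [Nat.lt_iff_add_one_le, Nat.le_div_iff_mul_le hd, add_mul, one_mul]
  omega

lemma count_split {d : ℕ} (hd : 0 < d) (p : ℕ → Prop) [DecidablePred p] (n : ℕ) :
    ((Finset.range n).filter p).card
      = ∑ r ∈ Finset.range d,
          ((Finset.range ((n + d - 1 - r) / d)).filter (fun k => p (k * d + r))).card := by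
  have hinj : ∀ r : ℕ, Function.Injective (fun k : ℕ => k * d + r) := by
    intro r x y h
    simp only at h
    have := Nat.eq_of_mul_eq_mul_right hd (by omega : x * d = y * d)
    omega
  have hcard : ∀ r ∈ Finset.range d,
      ((Finset.range ((n + d - 1 - r) / d)).filter (fun k => p (k * d + r))).card
        = (((Finset.range ((n + d - 1 - r) / d)).filter (fun k => p (k * d + r))).image
            (fun k => k * d + r)).card := by
    intro r _
    rw [Finset.card_image_of_injective _ (hinj r)]
  rw [Finset.sum_congr rfl hcard, ← Finset.card_biUnion]
  · congr 1
    ext i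
    simp only [Finset.mem_biUnion, Finset.mem_image, Finset.mem_filter, Finset.mem_range]
    constructor
    · rintro ⟨hi, hpi⟩
      have hdm : i / d * d + i % d = i := Nat.div_add_mod' i d
      refine ⟨i % d, Nat.mod_lt _ hd, i / d, ⟨?_, ?_⟩, ?_⟩
      · exact (blockIdx_iff hd _ (Nat.mod_lt _ hd) _ n).2 (by omega)
      · rw [show i / d * d + i % d = i from hdm]; exact hpi
      · exact hdm
    · rintro ⟨r, hr, k, ⟨hk, hpk⟩, rfl⟩
      exact ⟨(blockIdx_iff hd r hr k n).1 hk, hpk⟩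
  · intro r1 h1 r2 h2 hne
    simp only [Finset.mem_coe, Finset.mem_range] at h1 h2
    rw [Function.onFun, Finset.disjoint_left]
    intro x hx1 hx2
    simp only [Finset.mem_image, Finset.mem_filter] at hx1 hx2
    obtain ⟨k1, _, he1⟩ := hx1
    obtain ⟨k2, _, he2⟩ := hx2
    apply hne
    have : (k1 * d + r1) % d = (k2 * d + r2) % d := by rw [he1, he2]
    simpa [Nat.add_mul_mod_self_right, Nat.mod_eq_of_lt h1, Nat.mod_eq_of_lt h2,
      add_comm, Nat.mul_mod_left] using this

lemma rat_above {x : ℝ} (hx : x ∈ Set.Icc (0:ℝ) 1) {δ : ℝ} (hδ : 0 < δ) :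
    ∃ q : ℚ, (q:ℝ) ∈ Set.Icc (0:ℝ) 1 ∧ x ≤ (q:ℝ) ∧ (q:ℝ) ≤ x + δ := by
  obtain ⟨hx0, hx1⟩ := hx
  rcases eq_or_lt_of_le hx1 with h1 | h1
  · exact ⟨1, by norm_num, by simp [← h1], by simp [← h1]; linarith⟩
  · have : x < min (x + δ) 1 := by simp [h1]; linarith
    obtain ⟨q, hq1, hq2⟩ := exists_rat_btwn this
    have hq2' : (q:ℝ) < x + δ := lt_of_lt_of_le hq2 (min_le_left _ _)
    have hq2'' : (q:ℝ) < 1 := lt_of_lt_of_le hq2 (min_le_right _ _)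
    exact ⟨q, ⟨by linarith, by linarith⟩, le_of_lt hq1, le_of_lt hq2'⟩

lemma rat_below {x : ℝ} (hx : x ∈ Set.Icc (0:ℝ) 1) {δ : ℝ} (hδ : 0 < δ) :
    ∃ q : ℚ, (q:ℝ) ∈ Set.Icc (0:ℝ) 1 ∧ x - δ ≤ (q:ℝ) ∧ (q:ℝ) ≤ x := by
  obtain ⟨hx0, hx1⟩ := hx
  rcases eq_or_lt_of_le hx0 with h0 | h0
  · exact ⟨0, by norm_num, by simp [← h0]; linarith, by simp [← h0]⟩
  · have : max (x - δ) 0 < x := by simp [h0]; linarith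
    obtain ⟨q, hq1, hq2⟩ := exists_rat_btwn this
    have hq1' : x - δ < (q:ℝ) := lt_of_le_of_lt (le_max_left _ _) hq1
    have hq1'' : (0:ℝ) < q := lt_of_le_of_lt (le_max_right _ _) hq1
    exact ⟨q, ⟨by linarith, by linarith⟩, le_of_lt hq1', le_of_lt hq2⟩

lemma prod_diff_le {ι : Type*} (s : Finset ι) (b c : ι → ℝ)
    (hb0 : ∀ i ∈ s, 0 ≤ b i) (hbc : ∀ i ∈ s, b i ≤ c i) (hc1 : ∀ i ∈ s, c i ≤ 1) :
    ∏ i ∈ s, c i ≤ ∏ i ∈ s, b i + ∑ i ∈ s, (c i - b i) := by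
  induction s using Finset.cons_induction with
  | empty => simp
  | cons a s ha ih =>
    simp only [Finset.prod_cons, Finset.sum_cons]
    have h1 : ∏ i ∈ s, c i ≤ ∏ i ∈ s, b i + ∑ i ∈ s, (c i - b i) := by
      apply ih <;> intro i hi
      · exact hb0 i (Finset.mem_cons_of_mem hi)
      · exact hbc i (Finset.mem_cons_of_mem hi)
      · exact hc1 i (Finset.mem_cons_of_mem hi)
    have hPb0 : 0 ≤ ∏ i ∈ s, b i :=
      Finset.prod_nonneg fun i hi => hb0 i (Finset.mem_cons_of_mem hi)
    have hPb1 : ∏ i ∈ s, b i ≤ 1 :=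
      Finset.prod_le_one (fun i hi => hb0 i (Finset.mem_cons_of_mem hi))
        (fun i hi => le_trans (hbc i (Finset.mem_cons_of_mem hi)) (hc1 i (Finset.mem_cons_of_mem hi)))
    have hS0 : 0 ≤ ∑ i ∈ s, (c i - b i) :=
      Finset.sum_nonneg fun i hi => by linarith [hbc i (Finset.mem_cons_of_mem hi)]
    have hPc0 : 0 ≤ ∏ i ∈ s, c i :=
      Finset.prod_nonneg fun i hi =>
        le_trans (hb0 i (Finset.mem_cons_of_mem hi)) (hbc i (Finset.mem_cons_of_mem hi))
    have hba := hb0 a (Finset.mem_cons_self a s)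
    have hbca := hbc a (Finset.mem_cons_self a s)
    have hca := hc1 a (Finset.mem_cons_self a s)
    nlinarith

lemma identDistrib_ite {Ω : Type*} [MeasurableSpace Ω] (P : Measure Ω) [IsProbabilityMeasure P]
    {A B : Set Ω} (hA : MeasurableSet A) (hB : MeasurableSet B) (h : P A = P B) :
    ProbabilityTheory.IdentDistrib (fun ω => if ω ∈ A then (1:ℝ) else 0)
      (fun ω => if ω ∈ B then (1:ℝ) else 0) P P := by
  have hmA : Measurable (fun ω => if ω ∈ A then (1:ℝ) else 0) :=
    Measurable.ite hA measurable_const measurable_const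
  have hmB : Measurable (fun ω => if ω ∈ B then (1:ℝ) else 0) :=
    Measurable.ite hB measurable_const measurable_const
  refine ⟨hmA.aemeasurable, hmB.aemeasurable, ?_⟩
  ext s hs
  rw [Measure.map_apply hmA hs, Measure.map_apply hmB hs]
  have key : ∀ (C : Set Ω), (fun ω => if ω ∈ C then (1:ℝ) else 0) ⁻¹' s
      = (if (1:ℝ) ∈ s then C else ∅) ∪ (if (0:ℝ) ∈ s then Cᶜ else ∅) := by
    intro C
    ext ω
    by_cases hω : ω ∈ C <;> split_ifs <;> simp_all
  rw [key A, key B]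
  have hcompl : P Aᶜ = P Bᶜ := by
    rw [measure_compl hA (measure_ne_top _ _), measure_compl hB (measure_ne_top _ _), h]
  split_ifs with h1 h0
  · rw [Set.union_compl_self, Set.union_compl_self]
  · simp [h]
  · simp [hcompl]
  · simp

lemma m_lb {d r n : ℕ} (hd : 0 < d) (hr : r < d) : n ≤ ((n + d - 1 - r) / d) * d + r := by
  have h := Nat.div_add_mod' (n + d - 1 - r) d
  have h2 := Nat.mod_lt (n + d - 1 - r) hd
  omega

lemma m_ub {d r n : ℕ} (hd : 0 < d) (hr : r < d) : ((n + d - 1 - r) / d) * d + r < n + d := by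
  have h := Nat.div_mul_le_self (n + d - 1 - r) d
  omega

lemma m_tendsto_atTop {d r : ℕ} (hd : 0 < d) (hr : r < d) :
    Filter.Tendsto (fun n : ℕ => (n + d - 1 - r) / d) Filter.atTop Filter.atTop := by
  apply Filter.tendsto_atTop_atTop.2
  intro b
  refine ⟨b * d + d, fun n hn => ?_⟩
  rw [Nat.le_div_iff_mul_le hd]
  omega

lemma m_div_tendsto {d r : ℕ} (hd : 0 < d) (hr : r < d) :
    Filter.Tendsto (fun n : ℕ => (((n + d - 1 - r) / d : ℕ) : ℝ) / n) Filter.atTop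
      (nhds (1 / d)) := by
  have hlim1 : Filter.Tendsto (fun n : ℕ => 1 / (d:ℝ) - 1 / n) Filter.atTop (nhds (1/d)) := by
    have : Filter.Tendsto (fun _ : ℕ => 1/(d:ℝ)) Filter.atTop (nhds (1/d)) := tendsto_const_nhds
    simpa using this.sub tendsto_one_div_atTop_nhds_zero_nat
  have hlim2 : Filter.Tendsto (fun n : ℕ => 1 / (d:ℝ) + 1 / n) Filter.atTop (nhds (1/d)) := by
    have : Filter.Tendsto (fun _ : ℕ => 1/(d:ℝ)) Filter.atTop (nhds (1/d)) := tendsto_const_nhds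
    simpa using this.add tendsto_one_div_atTop_nhds_zero_nat
  apply tendsto_of_tendsto_of_tendsto_of_le_of_le' hlim1 hlim2
  · filter_upwards [Filter.eventually_ge_atTop 1] with n hn
    set m := (n + d - 1 - r) / d with hm
    have h1 : (n:ℝ) ≤ m * d + r := by exact_mod_cast m_lb hd hr
    have hd0 : (0:ℝ) < d := by exact_mod_cast hd
    have hn0 : (0:ℝ) < n := by exact_mod_cast hn
    have hrd : (r:ℝ) < d := by exact_mod_cast hr
    rw [div_sub_div _ _ hd0.ne' hn0.ne', div_le_div_iff₀ (by positivity) hn0]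
    have hr0 : (0:ℝ) ≤ r := Nat.cast_nonneg r
    nlinarith
  · filter_upwards [Filter.eventually_ge_atTop 1] with n hn
    set m := (n + d - 1 - r) / d with hm
    have h2 : (m:ℝ) * d + r < n + d := by exact_mod_cast m_ub hd hr
    have hd0 : (0:ℝ) < d := by exact_mod_cast hd
    have hn0 : (0:ℝ) < n := by exact_mod_cast hn
    have hr0 : (0:ℝ) ≤ r := Nat.cast_nonneg r
    rw [div_add_div _ _ hd0.ne' hn0.ne', div_le_div_iff₀ hn0 (by positivity)]
    nlinarith
section Meas
variable {Ω : Type*} [MeasurableSpace Ω] (P : Measure Ω) [IsProbabilityMeasure P]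
  (U : ℕ → Ω → ℝ) (hmeas : ∀ n, Measurable (U n))
  (hindep : ProbabilityTheory.iIndepFun U P)
  (hunif : ∀ n, Measure.map (U n) P = volume.restrict (Set.Icc (0 : ℝ) 1))

include hmeas hindep hunif in
lemma meas_block {d : ℕ} (a : Fin d → ℝ) (ha : ∀ j, a j ∈ Set.Icc (0 : ℝ) 1) (b : ℕ) :
    P (⋂ j : Fin d, U (b + (j : ℕ)) ⁻¹' Set.Ioc (0:ℝ) (a j))
      = ENNReal.ofReal (∏ j, a j) := by
  classical
  set e : Fin d → ℕ := fun j => b + (j : ℕ) with he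
  have einj : Function.Injective e := by
    intro j1 j2 h
    simp only [e] at h
    exact Fin.ext (by omega)
  set S : Finset ℕ := Finset.image e Finset.univ with hS
  set a' : ℕ → ℝ := fun i => if h : i - b < d then a ⟨i - b, h⟩ else 1 with ha'
  have ha'e : ∀ j : Fin d, a' (e j) = a j := by
    intro j
    simp only [a', e, Nat.add_sub_cancel_left]
    rw [dif_pos j.isLt]
  set sA : ℕ → Set Ω := fun i => U i ⁻¹' Set.Ioc (0:ℝ) (a' i) with hsA
  have hAeq : (⋂ j : Fin d, U (b + (j : ℕ)) ⁻¹' Set.Ioc (0:ℝ) (a j)) = ⋂ i ∈ S, sA i := by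
    ext ω
    simp only [Set.mem_iInter, Set.mem_preimage, S, Finset.mem_image, Finset.mem_univ, true_and]
    constructor
    · rintro h i ⟨j, rfl⟩
      rw [hsA]
      simp only [Set.mem_preimage]
      rw [ha'e j]
      exact h j
    · intro h j
      have := h (e j) ⟨j, rfl⟩
      rw [hsA] at this
      simp only [Set.mem_preimage] at this
      rwa [ha'e j] at this
  rw [hAeq]
  rw [hindep.meas_biInter (fun i _ => ⟨Set.Ioc (0:ℝ) (a' i), measurableSet_Ioc, rfl⟩)]
  rw [hS, Finset.prod_image (fun j _ j' _ h => einj h)]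
  have hterm : ∀ j : Fin d, P (sA (e j)) = ENNReal.ofReal (a j) := by
    intro j
    rw [hsA]
    simp only
    rw [ha'e j, ← Measure.map_apply (hmeas (e j)) measurableSet_Ioc, hunif (e j),
      Measure.restrict_apply measurableSet_Ioc]
    have hsub : Set.Ioc (0:ℝ) (a j) ∩ Set.Icc 0 1 = Set.Ioc (0:ℝ) (a j) := by
      apply Set.inter_eq_left.2
      intro x hx
      exact ⟨le_of_lt hx.1, le_trans hx.2 (ha j).2⟩
    rw [hsub, Real.volume_Ioc, sub_zero]
  rw [Finset.prod_congr rfl (fun j _ => hterm j),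
    ← ENNReal.ofReal_prod_of_nonneg (fun j _ => (ha j).1)]

end Meas


section Main
variable {Ω : Type*} [MeasurableSpace Ω] (P : Measure Ω) [IsProbabilityMeasure P]
  (U : ℕ → Ω → ℝ) (hmeas : ∀ n, Measurable (U n))
  (hindep : ProbabilityTheory.iIndepFun U P)
  (hunif : ∀ n, Measure.map (U n) P = volume.restrict (Set.Icc (0 : ℝ) 1))

include hmeas hindep hunif in
lemma ae_tendsto_fixed {d : ℕ} (hd : 1 ≤ d) (a : Fin d → ℝ)
    (ha : ∀ j, a j ∈ Set.Icc (0 : ℝ) 1) :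
    ∀ᵐ ω ∂P, Filter.Tendsto
      (fun n : ℕ => (1 / (n : ℝ)) *
        ((Finset.range n).filter
          (fun i => ∀ j : Fin d, U (i + (j : ℕ)) ω ∈ Set.Ioc (0 : ℝ) (a j))).card)
      Filter.atTop (nhds (∏ j, a j)) := by
  classical
  have hd0 : 0 < d := hd
  set L : ℝ := ∏ j, a j with hL
  have hL0 : 0 ≤ L := Finset.prod_nonneg fun j _ => (ha j).1
  -- the events and indicator variables
  set A : ℕ → ℕ → Set Ω := fun r k => ⋂ j : Fin d, U (k * d + r + (j : ℕ)) ⁻¹' Set.Ioc (0:ℝ) (a j)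
    with hA
  have hAmeas : ∀ r k, MeasurableSet (A r k) := fun r k =>
    MeasurableSet.iInter fun j => (hmeas _) measurableSet_Ioc
  have hPA : ∀ r k, P (A r k) = ENNReal.ofReal L := fun r k =>
    meas_block P U hmeas hindep hunif a ha (k * d + r)
  set Y : ℕ → ℕ → Ω → ℝ := fun r k ω => if ω ∈ A r k then 1 else 0 with hY
  have hYmeas : ∀ r k, Measurable (Y r k) := fun r k =>
    Measurable.ite (hAmeas r k) measurable_const measurable_const
  -- blocks as finsets
  set S : ℕ → ℕ → Finset ℕ := fun r k => Finset.image (fun j : Fin d => k * d + r + (j : ℕ))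
    Finset.univ with hSdef
  have hdisj : ∀ r k l, k ≠ l → Disjoint (S r k) (S r l) := by
    intro r k l hkl
    rw [Finset.disjoint_left]
    intro x hx1 hx2
    simp only [hSdef, Finset.mem_image, Finset.mem_univ, true_and] at hx1 hx2
    obtain ⟨j1, he1⟩ := hx1
    obtain ⟨j2, he2⟩ := hx2
    have hj1 := j1.isLt
    have hj2 := j2.isLt
    rcases Nat.lt_or_ge k l with h | h
    · have h2 : k * d + d ≤ l * d := by
        have := Nat.mul_le_mul_right d (by omega : k + 1 ≤ l)
        rwa [add_mul, one_mul] at this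
      omega
    · have h' : l < k := lt_of_le_of_ne h (Ne.symm hkl)
      have h2 : l * d + d ≤ k * d := by
        have := Nat.mul_le_mul_right d (by omega : l + 1 ≤ k)
        rwa [add_mul, one_mul] at this
      omega
  -- strong law for each residue r
  have hSLLN : ∀ r : Fin d, ∀ᵐ ω ∂P,
      Filter.Tendsto (fun m : ℕ => (∑ k ∈ Finset.range m, Y r k ω) / m)
        Filter.atTop (nhds L) := by
    intro r
    -- integrability
    have hint : Integrable (Y (r:ℕ) 0) P := by
      have : Y (r:ℕ) 0 = Set.indicator (A r 0) (fun _ => (1:ℝ)) := by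
        funext ω
        rw [Set.indicator_apply]
      rw [this]
      exact (integrable_const (1:ℝ)).indicator (hAmeas r 0)
    -- pairwise independence
    have hpair : Pairwise (Function.onFun (ProbabilityTheory.IndepFun · · P) (Y (r:ℕ))) := by
      intro k l hkl
      have hmem : ∀ (k : ℕ) (j : Fin d), k * d + r + (j:ℕ) ∈ S r k := fun k j =>
        Finset.mem_image_of_mem _ (Finset.mem_univ j)
      set g : ∀ k : ℕ, ((i : {x // x ∈ S (r:ℕ) k}) → ℝ) → ℝ := fun k x =>
        if ∀ j : Fin d, x ⟨k * d + r + (j:ℕ), hmem k j⟩ ∈ Set.Ioc (0:ℝ) (a j) then 1 else 0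
        with hg
      have hgmeas : ∀ k, Measurable (g k) := by
        intro k
        apply Measurable.ite _ measurable_const measurable_const
        have : {x : (i : {x // x ∈ S (r:ℕ) k}) → ℝ |
            ∀ j : Fin d, x ⟨k * d + r + (j:ℕ), hmem k j⟩ ∈ Set.Ioc (0:ℝ) (a j)}
            = ⋂ j : Fin d, (fun x : (i : {x // x ∈ S (r:ℕ) k}) → ℝ =>
                x ⟨k * d + r + (j:ℕ), hmem k j⟩) ⁻¹' Set.Ioc (0:ℝ) (a j) := by
          ext x; simp [Set.mem_iInter]
        rw [this]
        exact MeasurableSet.iInter fun j => (measurable_pi_apply _) measurableSet_Ioc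
      have hcomp : ∀ k : ℕ, (g k) ∘ (fun ω (i : {x // x ∈ S (r:ℕ) k}) => U (i:ℕ) ω) = Y r k := by
        intro k
        funext ω
        simp only [Function.comp_apply, hg, hY, hA, Set.mem_iInter, Set.mem_preimage]
      have := (hindep.indepFun_finset (S r k) (S r l) (hdisj r k l hkl) hmeas).comp
        (hgmeas k) (hgmeas l)
      rwa [hcomp k, hcomp l] at this
    -- identical distribution
    have hident : ∀ k, ProbabilityTheory.IdentDistrib (Y (r:ℕ) k) (Y (r:ℕ) 0) P P := fun k =>
      identDistrib_ite P (hAmeas r k) (hAmeas r 0) (by rw [hPA, hPA])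
    have hexp : (∫ x, Y (r:ℕ) 0 x ∂P) = L := by
      have : Y (r:ℕ) 0 = Set.indicator (A r 0) (fun _ => (1:ℝ)) := by
        funext ω; rw [Set.indicator_apply]
      rw [this, integral_indicator_const _ (hAmeas r 0), measureReal_def, hPA r 0, smul_eq_mul, mul_one,
        ENNReal.toReal_ofReal hL0]
    have := ProbabilityTheory.strong_law_ae_real (Y (r:ℕ)) hint hpair hident
    rwa [hexp] at this
  rw [← ae_all_iff] at hSLLN
  filter_upwards [hSLLN] with ω hω
  -- deterministic part
  set p : ℕ → Prop := fun i => ∀ j : Fin d, U (i + (j : ℕ)) ω ∈ Set.Ioc (0 : ℝ) (a j) with hp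
  have hYp : ∀ r k, Y r k ω = if p (k * d + r) then 1 else 0 := by
    intro r k
    simp only [hY, hA, hp, Set.mem_iInter, Set.mem_preimage]
  have hident : (fun n : ℕ => (1 / (n : ℝ)) * ((Finset.range n).filter p).card)
      = fun n : ℕ => ∑ r ∈ Finset.range d,
          (∑ k ∈ Finset.range ((n + d - 1 - r) / d), Y r k ω) / ((n + d - 1 - r) / d : ℕ)
            * ((((n + d - 1 - r) / d : ℕ) : ℝ) / n) := by
    funext n
    rw [count_split hd0 p n]
    push_cast
    rw [Finset.mul_sum]
    apply Finset.sum_congr rfl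
    intro r _
    have hsum : (∑ k ∈ Finset.range ((n + d - 1 - r) / d), Y r k ω)
        = (((Finset.range ((n + d - 1 - r) / d)).filter (fun k => p (k * d + r))).card : ℝ) := by
      rw [Finset.sum_congr rfl (fun k _ => hYp r k), Finset.sum_boole]
    rw [hsum]
    rcases eq_or_ne ((n + d - 1 - r) / d) 0 with hmz | hmz
    · rw [hmz]
      simp
    · have hmz' : (((n + d - 1 - r) / d : ℕ) : ℝ) ≠ 0 := Nat.cast_ne_zero.2 hmz
      field_simp
  have goal2 : Filter.Tendsto
      (fun n : ℕ => ∑ r ∈ Finset.range d,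
          (∑ k ∈ Finset.range ((n + d - 1 - r) / d), Y r k ω) / ((n + d - 1 - r) / d : ℕ)
            * ((((n + d - 1 - r) / d : ℕ) : ℝ) / n))
      Filter.atTop (nhds L) := by
    have hsum_lim : (∑ _r ∈ Finset.range d, L * (1 / d)) = L := by
      rw [Finset.sum_const, Finset.card_range, nsmul_eq_mul]
      field_simp
    rw [← hsum_lim]
    apply tendsto_finset_sum
    intro r hr
    have hrd : r < d := Finset.mem_range.1 hr
    have h1 : Filter.Tendsto (fun n : ℕ =>
        (∑ k ∈ Finset.range ((n + d - 1 - r) / d), Y r k ω) / (((n + d - 1 - r) / d : ℕ) : ℝ))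
        Filter.atTop (nhds L) :=
      (hω ⟨r, hrd⟩).comp (m_tendsto_atTop hd0 hrd)
    exact h1.mul (m_div_tendsto hd0 hrd)
  rw [hident]
  exact goal2

end Main

end Helpers

/-- Every sequence of IID uniform random numbers is almost surely completely uniformly
distributed: if `(U_n)` are independent random variables on a probability space
`(Ω, ℱ, P)`, each with law equal to Lebesgue measure restricted to `[0,1]`, then for
`P`-almost every `ω` the sequence `(U_n(ω))` is CUD. -/
theorem iid_uniform_ae_isCUD
    {Ω : Type*} [MeasurableSpace Ω] (P : Measure Ω) [IsProbabilityMeasure P]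
    (U : ℕ → Ω → ℝ) (hmeas : ∀ n, Measurable (U n))
    (hindep : ProbabilityTheory.iIndepFun U P)
    (hunif : ∀ n, Measure.map (U n) P = volume.restrict (Set.Icc (0 : ℝ) 1)) :
    ∀ᵐ ω ∂P, IsCUD (fun n => U n ω) := by
  classical
  have key : ∀ᵐ ω ∂P, ∀ d : ℕ, ∀ q : Fin d → ℚ, 1 ≤ d →
      (∀ j, ((q j : ℝ)) ∈ Set.Icc (0:ℝ) 1) →
      Filter.Tendsto (fun n : ℕ => (1/(n:ℝ)) * ((Finset.range n).filter
        (fun i => ∀ j : Fin d, U (i + (j:ℕ)) ω ∈ Set.Ioc (0:ℝ) ((q j : ℝ)))).card)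
        Filter.atTop (nhds (∏ j, ((q j : ℝ)))) := by
    rw [ae_all_iff]
    intro d
    rw [ae_all_iff]
    intro q
    by_cases hd : 1 ≤ d
    · by_cases hq : ∀ j, ((q j : ℝ)) ∈ Set.Icc (0:ℝ) 1
      · filter_upwards [ae_tendsto_fixed P U hmeas hindep hunif hd (fun j => (q j : ℝ)) hq]
          with ω h _ _
        exact h
      · filter_upwards with ω _ h2
        exact absurd h2 hq
    · filter_upwards with ω h1
      exact absurd h1 hd
  filter_upwards [key] with ω hω
  intro d hd a ha
  show Filter.Tendsto
      (fun n : ℕ => (1 / (n : ℝ)) *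
        ((Finset.range n).filter
          (fun i => ∀ j : Fin d, U (i + (j : ℕ)) ω ∈ Set.Ioc (0 : ℝ) (a j))).card)
      Filter.atTop (nhds (∏ j, a j))
  set L : ℝ := ∏ j, a j with hL
  rw [Metric.tendsto_atTop]
  intro ε hε
  set δ : ℝ := ε / (2 * (d + 1)) with hδ
  have hδ0 : 0 < δ := by positivity
  choose qlo hqlo1 hqlo2 hqlo3 using fun j : Fin d => rat_below (ha j) hδ0
  choose qhi hqhi1 hqhi2 hqhi3 using fun j : Fin d => rat_above (ha j) hδ0
  have hlo := hω d qlo hd hqlo1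
  have hhi := hω d qhi hd hqhi1
  have hdδ : (d:ℝ) * δ ≤ ε / 2 := by
    rw [hδ]
    rw [mul_div_assoc']
    rw [div_le_div_iff₀ (by positivity) (by norm_num)]
    have : (d:ℝ) ≤ d + 1 := by linarith
    nlinarith
  have hsum_const : ∀ (c : ℝ), (∑ _j : Fin d, c) = d * c := by
    intro c
    rw [Finset.sum_const, Finset.card_univ, Fintype.card_fin, nsmul_eq_mul]
  have hPlo : L - ε/2 ≤ ∏ j, (qlo j : ℝ) := by
    have h := prod_diff_le Finset.univ (fun j => (qlo j : ℝ)) a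
      (fun j _ => (hqlo1 j).1) (fun j _ => hqlo3 j) (fun j _ => (ha j).2)
    have hsum : ∑ j : Fin d, (a j - (qlo j : ℝ)) ≤ d * δ := by
      calc ∑ j : Fin d, (a j - (qlo j:ℝ)) ≤ ∑ _j : Fin d, δ :=
            Finset.sum_le_sum (fun j _ => by linarith [hqlo2 j])
        _ = d * δ := hsum_const δ
    rw [← hL] at h
    linarith
  have hPhi : ∏ j, (qhi j : ℝ) ≤ L + ε/2 := by
    have h := prod_diff_le Finset.univ a (fun j => (qhi j : ℝ))
      (fun j _ => (ha j).1) (fun j _ => hqhi2 j) (fun j _ => (hqhi1 j).2)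
    have hsum : ∑ j : Fin d, ((qhi j : ℝ) - a j) ≤ d * δ := by
      calc ∑ j : Fin d, ((qhi j:ℝ) - a j) ≤ ∑ _j : Fin d, δ :=
            Finset.sum_le_sum (fun j _ => by linarith [hqhi3 j])
        _ = d * δ := hsum_const δ
    rw [← hL] at h
    linarith
  have h1 := hlo.eventually (eventually_gt_nhds
    (show (∏ j, (qlo j:ℝ)) - ε/4 < ∏ j, (qlo j:ℝ) by linarith))
  have h2 := hhi.eventually (eventually_lt_nhds
    (show (∏ j, (qhi j:ℝ)) < (∏ j, (qhi j:ℝ)) + ε/4 by linarith))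
  have hmono : ∀ n : ℕ,
      (1/(n:ℝ)) * ((Finset.range n).filter
        (fun i => ∀ j : Fin d, U (i + (j:ℕ)) ω ∈ Set.Ioc (0:ℝ) ((qlo j : ℝ)))).card
      ≤ (1/(n:ℝ)) * ((Finset.range n).filter
        (fun i => ∀ j : Fin d, U (i + (j:ℕ)) ω ∈ Set.Ioc (0:ℝ) (a j))).card
      ∧ (1/(n:ℝ)) * ((Finset.range n).filter
        (fun i => ∀ j : Fin d, U (i + (j:ℕ)) ω ∈ Set.Ioc (0:ℝ) (a j))).card
      ≤ (1/(n:ℝ)) * ((Finset.range n).filter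
        (fun i => ∀ j : Fin d, U (i + (j:ℕ)) ω ∈ Set.Ioc (0:ℝ) ((qhi j : ℝ)))).card := by
    intro n
    constructor
    · apply mul_le_mul_of_nonneg_left _ (by positivity)
      apply Nat.cast_le.2
      apply Finset.card_le_card
      apply Finset.monotone_filter_right
      intro i _ hi j
      exact ⟨(hi j).1, le_trans (hi j).2 (hqlo3 j)⟩
    · apply mul_le_mul_of_nonneg_left _ (by positivity)
      apply Nat.cast_le.2
      apply Finset.card_le_card
      apply Finset.monotone_filter_right
      intro i _ hi j
      exact ⟨(hi j).1, le_trans (hi j).2 (hqhi2 j)⟩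
  obtain ⟨N1, hN1⟩ := Filter.eventually_atTop.1 h1
  obtain ⟨N2, hN2⟩ := Filter.eventually_atTop.1 h2
  refine ⟨max N1 N2, fun n hn => ?_⟩
  have hb1 := hN1 n (le_trans (le_max_left _ _) hn)
  have hb2 := hN2 n (le_trans (le_max_right _ _) hn)
  obtain ⟨hm1, hm2⟩ := hmono n
  rw [Real.dist_eq, abs_lt]
  constructor
  · have : L - ε < (∏ j, (qlo j:ℝ)) - ε/4 := by linarith
    linarith
  · have : (∏ j, (qhi j:ℝ)) + ε/4 < L + ε := by linarith
    linarith
end
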